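/- The insertion correspondence Φ is a bijection between injective words with letters in the alphabet {i^{(j)} : i ∈ ℤ, j ≥ 1} and pairs (P, Q) where P is a local binary search labeling and Q is a decreasing labeling of a common indexed forest F. -/

import Mathlib

/-- Generic labeled plane binary trees: internal nodes carry a label in `α`. -/
inductive GT (α : Type) where
  | leaf : GT α
  | node : α → GT α → GT α → GT α
deriving DecidableEq

/-- Number of internal nodes. -/
def GT.size {α : Type} : GT α → ℕ
  | .leaf => 0
  | .node _ l r => l.size + r.size + 1

/-- Multiset of labels of internal nodes. -/
def GT.labels {α : Type} : GT α → Multiset α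
  | .leaf => 0
  | .node k l r => k ::ₘ (l.labels + r.labels)

/-- Relabel a labeled tree. -/
def GT.map {α β : Type} (f : α → β) : GT α → GT β
  | .leaf => .leaf
  | .node k l r => .node (f k) (l.map f) (r.map f)

/-- Root label, if any. -/
def GT.rootLabel? {α : Type} : GT α → Option α
  | .leaf => none
  | .node k _ _ => some k

/-- Insert a located tree into a list of located trees, keeping the list sorted
by starting position. -/
def insSorted {α : Type} (x : ℤ × GT α) : List (ℤ × GT α) → List (ℤ × GT α)
  | [] => [x]
  | y :: ys => if x.1 ≤ y.1 then x :: y :: ys else y :: insSorted x ys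

/-- One step of the insertion correspondence `Φ`: insert the letter `c` (with
integer value `val c`, letters compared by the strict order `lt`) into the
current labeled indexed forest, given as a list of (starting position, labeled
tree) pairs sorted by position. If the value of `c` is outside the support, a
new node is created there, capturing the adjacent trees (if any) as children;
if it lies in the support interval of a tree with root label `rl`, the new node
becomes the new root, with that tree as left child (and the next tree, if now
adjacent, as right child) when `rl < c`, and symmetrically otherwise. -/
def insertL {α : Type} [DecidableEq α] (val : α → ℤ) (lt : α → α → Bool)
    (s : List (ℤ × GT α)) (c : α) : List (ℤ × GT α) :=
  let i := val c
  match s.find? (fun p => decide (p.1 ≤ i ∧ i < p.1 + (p.2.size : ℤ))) with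
  | some (a, t) =>
      let rest := s.filter (fun p => decide (p.1 ≠ a))
      match t.rootLabel? with
      | none => s
      | some rl =>
        if lt rl c then
          match rest.find? (fun p => decide (p.1 = a + (t.size : ℤ) + 1)) with
          | some (a', t') =>
              insSorted (a, GT.node c t t')
                (rest.filter (fun p => decide (p.1 ≠ a')))
          | none => insSorted (a, GT.node c t GT.leaf) rest
        else
          match rest.find? (fun p => decide (p.1 + (p.2.size : ℤ) = a - 1)) with
          | some (a'', t'') =>
              insSorted (a'', GT.node c t'' t)
                (rest.filter (fun p => decide (p.1 ≠ a'')))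
          | none => insSorted (a - 1, GT.node c GT.leaf t) rest
  | none =>
      let lo := s.find? (fun p => decide (p.1 + (p.2.size : ℤ) = i))
      let ro := s.find? (fun p => decide (p.1 = i + 1))
      let rest := s.filter
        (fun p => decide (¬(p.1 + (p.2.size : ℤ) = i ∨ p.1 = i + 1)))
      match lo, ro with
      | some (a, t), some (_, t') => insSorted (a, GT.node c t t') rest
      | some (a, t), none => insSorted (a, GT.node c t GT.leaf) rest
      | none, some (_, t') => insSorted (i, GT.node c GT.leaf t') rest
      | none, none => insSorted (i, GT.node c GT.leaf GT.leaf) rest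

/-- Insert all the letters of a word, starting from the empty forest. -/
def insertAll {α : Type} [DecidableEq α] (val : α → ℤ) (lt : α → α → Bool)
    (W : List α) : List (ℤ × GT α) :=
  W.foldl (insertL val lt) []

/-- The support of a located labeled forest. -/
def SuppS {α : Type} (s : List (ℤ × GT α)) : Set ℤ :=
  {i | ∃ p ∈ s, p.1 ≤ i ∧ i < p.1 + (p.2.size : ℤ)}

/-- Strict lexicographic order on the alphabet `{i^{(j)}}`, encoded as pairs. -/
def lexLtB (p q : ℤ × ℕ) : Bool :=
  decide (p.1 < q.1 ∨ (p.1 = q.1 ∧ p.2 < q.2))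

/-- Strict lexicographic order on the alphabet, as a proposition. -/
def lexLt (p q : ℤ × ℕ) : Prop := p.1 < q.1 ∨ (p.1 = q.1 ∧ p.2 < q.2)

/-- The root label of `T` (if any) is smaller than `c` in the alphabet order. -/
def rootLtA (c : ℤ × ℕ) : GT (ℤ × ℕ) → Prop
  | .leaf => True
  | .node k _ _ => lexLt k c

/-- The root label of `T` (if any) is larger than `c` in the alphabet order. -/
def rootGtA (c : ℤ × ℕ) : GT (ℤ × ℕ) → Prop
  | .leaf => True
  | .node k _ _ => lexLt c k

/-- Local binary search labeling conditions, for a labeled tree whose inorder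
canonical labels start at `a`. -/
def IsLBS : GT (ℤ × ℕ) → ℤ → Prop
  | .leaf, _ => True
  | .node k l r, a =>
      (a ≤ k.1 ∧ k.1 < a + ((l.size + r.size + 1 : ℕ) : ℤ)) ∧
      rootLtA k l ∧ rootGtA k r ∧ IsLBS l a ∧ IsLBS r (a + (l.size : ℤ) + 1)

/-- The root label of `T` (if any) is smaller than `k`. -/
def rootBelow (k : ℕ) : GT ℕ → Prop
  | .leaf => True
  | .node m _ _ => m < k

/-- Decreasing labelings: labels strictly decrease away from the root. -/
def IsDec : GT ℕ → Prop
  | .leaf => True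
  | .node k l r => rootBelow k l ∧ rootBelow k r ∧ IsDec l ∧ IsDec r

/-- The insertion correspondence `Φ` on injective words over `{i^{(j)}}`,
recording simultaneously the letters (`P`-symbol) and the insertion times
(`Q`-symbol) as node labels `((letter), time)`. -/
def Phi2 (W : List (ℤ × ℕ)) : List (ℤ × GT ((ℤ × ℕ) × ℕ)) :=
  insertAll (fun x => x.1.1) (fun p q => lexLtB p.1 q.1)
    (W.zipIdx.map (fun nc => (nc.1, nc.2 + 1)))

/-- A valid pair `(P, Q)` of common shape, encoded as a single located forest
with combined labels: the supports are maximal intervals, the trees nonempty,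
the letter labels form a local binary search labeling with pairwise distinct
letters, and the time labels form a decreasing labeling with labels exactly
`{1, …, N}` (`N` the total number of nodes). -/
def GoodPair (s : List (ℤ × GT ((ℤ × ℕ) × ℕ))) : Prop :=
  s.Chain' (fun p q => p.1 + (p.2.size : ℤ) + 1 ≤ q.1) ∧
  (∀ p ∈ s, p.2 ≠ GT.leaf) ∧
  (∀ p ∈ s, IsLBS (p.2.map Prod.fst) p.1) ∧
  ((s.map (fun p => (p.2.map Prod.fst).labels)).sum : Multiset (ℤ × ℕ)).Nodup ∧
  (∀ p ∈ s, IsDec (p.2.map Prod.snd)) ∧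
  ((s.map (fun p => (p.2.map Prod.snd).labels)).sum : Multiset ℕ)
    = (Multiset.range ((s.map (fun p => p.2.size)).sum)).map (· + 1)

section Infra
open List

variable {α β : Type}

theorem GT_labels_map (f : α → β) : ∀ t : GT α, (t.map f).labels = t.labels.map f
  | .leaf => rfl
  | .node k l r => by
    simp [GT.map, GT.labels, GT_labels_map f l, GT_labels_map f r]

theorem GT_size_map (f : α → β) : ∀ t : GT α, (t.map f).size = t.size
  | .leaf => rfl
  | .node k l r => by simp [GT.map, GT.size, GT_size_map f l, GT_size_map f r]

theorem GT_card_labels : ∀ t : GT α, Multiset.card t.labels = t.size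
  | .leaf => rfl
  | .node k l r => by
    simp [GT.labels, GT.size, GT_card_labels l, GT_card_labels r]

/-- The sortedness relation on located forests. -/
abbrev RelF (p q : ℤ × GT α) : Prop := p.1 + (p.2.size : ℤ) + 1 ≤ q.1

theorem Rel_trans {p q r : ℤ × GT α} (h1 : RelF p q) (h2 : RelF q r) : RelF p r := by
  unfold RelF at *; omega

instance : IsTrans (ℤ × GT α) RelF := ⟨fun _ _ _ => Rel_trans⟩

theorem chain'_iff_pairwise_rel {s : List (ℤ × GT α)} :
    s.Chain' RelF ↔ s.Pairwise RelF :=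
  List.isChain_iff_pairwise

theorem insSorted_perm (x : ℤ × GT α) : ∀ l, insSorted x l ~ x :: l
  | [] => List.Perm.refl _
  | y :: ys => by
    unfold insSorted
    split
    · exact List.Perm.refl _
    · exact (List.Perm.cons y (insSorted_perm x ys)).trans (List.Perm.swap x y ys)

theorem pairwise_insSorted {x : ℤ × GT α} : ∀ {l}, l.Pairwise RelF →
    (∀ y ∈ l, RelF y x ∨ RelF x y) → (insSorted x l).Pairwise RelF
  | [], _, _ => List.pairwise_singleton _ _
  | y :: ys, h, hx => by
    rw [List.pairwise_cons] at h
    unfold insSorted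
    split
    · rename_i hle
      have hxy : RelF x y := by
        rcases hx y (by simp) with h' | h'
        · exfalso; unfold RelF at h'; omega
        · exact h'
      refine List.pairwise_cons.2 ⟨?_, List.pairwise_cons.2 ⟨h.1, h.2⟩⟩
      intro z hz
      rcases List.mem_cons.1 hz with rfl | hz'
      · exact hxy
      · exact Rel_trans hxy (h.1 z hz')
    · rename_i hle
      refine List.pairwise_cons.2 ⟨?_, pairwise_insSorted h.2 (fun z hz => hx z (by simp [hz]))⟩
      intro z hz
      have := List.mem_cons.1 ((insSorted_perm x ys).mem_iff.1 hz)
      rcases this with rfl | hz'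
      · rcases hx y (by simp) with h' | h'
        · exact h'
        · exfalso; unfold RelF at h'; omega
      · exact h.1 z hz'

theorem insSorted_cons_of_le {x : ℤ × GT α} {B : List (ℤ × GT α)}
    (h : ∀ y ∈ B.head?, x.1 ≤ y.1) : insSorted x B = x :: B := by
  cases B with
  | nil => rfl
  | cons y ys =>
    unfold insSorted
    rw [if_pos (h y rfl)]

theorem insSorted_append {x : ℤ × GT α} : ∀ {A : List (ℤ × GT α)} (B : List (ℤ × GT α)),
    (∀ y ∈ A, y.1 < x.1) → insSorted x (A ++ B) = A ++ insSorted x B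
  | [], B, _ => rfl
  | y :: ys, B, h => by
    have hy : ¬ x.1 ≤ y.1 := not_le.2 (h y (by simp))
    simp only [List.cons_append, insSorted, if_neg hy]
    exact congrArg (y :: ·) (insSorted_append B (fun z hz => h z (by simp [hz])))

theorem find?_eq_some_unique {p : β → Bool} {l : List β} {x : β}
    (hx : x ∈ l) (hpx : p x = true) (hu : ∀ y ∈ l, p y = true → y = x) :
    l.find? p = some x := by
  induction l with
  | nil => simp at hx
  | cons a l ih =>
    by_cases hpa : p a = true
    · have : a = x := hu a (by simp) hpa
      subst this
      simp [List.find?_cons_of_pos hpa]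
    · rw [List.find?_cons_of_neg (by simpa using hpa)]
      rcases List.mem_cons.1 hx with rfl | hx'
      · exact absurd hpx hpa
      · exact ih hx' (fun y hy hpy => hu y (by simp [hy]) hpy)

theorem pairwise_rel_cases {s : List (ℤ × GT α)} (hp : s.Pairwise RelF) {x y}
    (hx : x ∈ s) (hy : y ∈ s) : x = y ∨ RelF x y ∨ RelF y x := by
  induction s with
  | nil => simp at hx
  | cons z t ih =>
    rw [List.pairwise_cons] at hp
    rcases List.mem_cons.1 hx with rfl | hx' <;> rcases List.mem_cons.1 hy with rfl | hy'
    · exact Or.inl rfl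
    · exact Or.inr (Or.inl (hp.1 y hy'))
    · exact Or.inr (Or.inr (hp.1 x hx'))
    · exact ih hp.2 hx' hy'

/-- The combined multiset of labels of a located forest. -/
def lblA (s : List (ℤ × GT α)) : Multiset α := (s.map (fun p => p.2.labels)).sum

theorem lblA_perm {s s' : List (ℤ × GT α)} (h : s ~ s') : lblA s = lblA s' :=
  (h.map _).sum_eq

theorem lblA_append (A B : List (ℤ × GT α)) : lblA (A ++ B) = lblA A + lblA B := by
  simp [lblA]

theorem lblA_cons (x : ℤ × GT α) (s : List (ℤ × GT α)) :
    lblA (x :: s) = x.2.labels + lblA s := by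
  simp [lblA]

theorem mem_lblA {s : List (ℤ × GT α)} {p : ℤ × GT α} {x : α}
    (hp : p ∈ s) (hx : x ∈ p.2.labels) : x ∈ lblA s := by
  rcases List.append_of_mem hp with ⟨A, B, rfl⟩
  rw [lblA_append, lblA_cons]
  simp [hx]

theorem card_lblA (s : List (ℤ × GT α)) :
    Multiset.card (lblA s) = (s.map (fun p => p.2.size)).sum := by
  induction s with
  | nil => rfl
  | cons x t ih => simp [lblA_cons, GT_card_labels, ih]

theorem map_listsum (f : α → β) : ∀ l : List (Multiset α),
    l.sum.map f = (l.map (Multiset.map f)).sum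
  | [] => by simp
  | m :: l => by simp [map_listsum f l]

theorem lblA_map_fst (s : List (ℤ × GT (α × β))) :
    (s.map (fun p => (p.2.map Prod.fst).labels)).sum = (lblA s).map Prod.fst := by
  rw [lblA, map_listsum]
  congr 1
  simp [GT_labels_map]

theorem lblA_map_snd (s : List (ℤ × GT (α × β))) :
    (s.map (fun p => (p.2.map Prod.snd).labels)).sum = (lblA s).map Prod.snd := by
  rw [lblA, map_listsum]
  congr 1
  simp [GT_labels_map]

theorem filter_key_ne {A B : List (ℤ × GT α)} {x : ℤ × GT α}
    (h : (A ++ x :: B).Pairwise RelF) :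
    (A ++ x :: B).filter (fun p => decide (p.1 ≠ x.1)) = A ++ B := by
  rw [List.pairwise_append] at h
  have hB := List.pairwise_cons.1 h.2.1
  rw [List.filter_append]
  congr 1
  · apply List.filter_eq_self.2
    intro a ha
    have : RelF a x := h.2.2 a ha x (by simp)
    simp only [decide_eq_true_eq]
    unfold RelF at this; omega
  · rw [List.filter_cons_of_neg (fun hh => (of_decide_eq_true hh) rfl)]
    apply List.filter_eq_self.2
    intro a ha
    have : RelF x a := hB.1 a ha
    simp only [decide_eq_true_eq]
    unfold RelF at this; omega

theorem lexLtB_iff {p q : ℤ × ℕ} : lexLtB p q = true ↔ lexLt p q := by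
  simp [lexLtB, lexLt]

theorem lexLt_total {p q : ℤ × ℕ} (h : p ≠ q) : lexLt p q ∨ lexLt q p := by
  unfold lexLt
  rcases lt_trichotomy p.1 q.1 with h' | h' | h'
  · exact Or.inl (Or.inl h')
  · rcases lt_trichotomy p.2 q.2 with h'' | h'' | h''
    · exact Or.inl (Or.inr ⟨h', h''⟩)
    · exact absurd (Prod.ext h' h'') h
    · exact Or.inr (Or.inr ⟨h'.symm, h''⟩)
  · exact Or.inr (Or.inl h')

end Infra


section Main
open List

abbrev Lbl : Type := (ℤ × ℕ) × ℕ
abbrev Forest : Type := List (ℤ × GT Lbl)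
abbrev valF : Lbl → ℤ := fun x => x.1.1
abbrev ltF : Lbl → Lbl → Bool := fun p q => lexLtB p.1 q.1

/-- Structural goodness of a forest. -/
def Pre (s : Forest) : Prop :=
  s.Pairwise RelF ∧ (∀ p ∈ s, p.2 ≠ GT.leaf) ∧
  (∀ p ∈ s, IsLBS (p.2.map Prod.fst) p.1) ∧ (∀ p ∈ s, IsDec (p.2.map Prod.snd))

theorem size_pos_of_ne_leaf {t : GT Lbl} (h : t ≠ GT.leaf) : 1 ≤ t.size := by
  cases t with
  | leaf => exact absurd rfl h
  | node k l r => simp [GT.size]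

theorem lbs_node {k : Lbl} {l r : GT Lbl} {a : ℤ}
    (h : IsLBS ((GT.node k l r).map Prod.fst) a) :
    (a ≤ k.1.1 ∧ k.1.1 < a + ((GT.node k l r).size : ℤ)) ∧
      rootLtA k.1 (l.map Prod.fst) ∧ rootGtA k.1 (r.map Prod.fst) ∧
      IsLBS (l.map Prod.fst) a ∧ IsLBS (r.map Prod.fst) (a + (l.size : ℤ) + 1) := by
  simp only [GT.map, IsLBS, GT_size_map] at h
  obtain ⟨⟨h1, h2⟩, h3, h4, h5, h6⟩ := h
  refine ⟨⟨h1, ?_⟩, h3, h4, h5, h6⟩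
  · simpa [GT.size] using h2

theorem dec_node {k : Lbl} {l r : GT Lbl}
    (h : IsDec ((GT.node k l r).map Prod.snd)) :
    rootBelow k.2 (l.map Prod.snd) ∧ rootBelow k.2 (r.map Prod.snd) ∧
      IsDec (l.map Prod.snd) ∧ IsDec (r.map Prod.snd) := by
  simpa only [GT.map, IsDec] using h

theorem dec_lt_of_rootBelow : ∀ (t : GT Lbl), IsDec (t.map Prod.snd) →
    ∀ x ∈ t.labels, ∀ b : ℕ, rootBelow b (t.map Prod.snd) → x.2 < b
  | .leaf => by intro _ x hx; simp [GT.labels] at hx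
  | .node k l r => by
    intro hdec x hx b hb
    obtain ⟨d1, d2, d3, d4⟩ := dec_node hdec
    simp only [GT.map, rootBelow] at hb
    simp only [GT.labels, Multiset.mem_cons, Multiset.mem_add] at hx
    rcases hx with rfl | hx | hx
    · exact hb
    · exact lt_trans (dec_lt_of_rootBelow l d3 x hx k.2 d1) hb
    · exact lt_trans (dec_lt_of_rootBelow r d4 x hx k.2 d2) hb

theorem dec_le_root {k : Lbl} {l r : GT Lbl}
    (hdec : IsDec ((GT.node k l r).map Prod.snd)) :
    ∀ x ∈ (GT.node k l r).labels, x.2 ≤ k.2 := by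
  intro x hx
  obtain ⟨d1, d2, d3, d4⟩ := dec_node hdec
  simp only [GT.labels, Multiset.mem_cons, Multiset.mem_add] at hx
  rcases hx with rfl | hx | hx
  · exact le_refl _
  · exact le_of_lt (dec_lt_of_rootBelow l d3 x hx k.2 d1)
  · exact le_of_lt (dec_lt_of_rootBelow r d4 x hx k.2 d2)

theorem pre_insSorted {L : Forest} {x : ℤ × GT Lbl}
    (h1 : L.Pairwise RelF) (h2 : ∀ y ∈ L, RelF y x ∨ RelF x y)
    (hnl : ∀ p ∈ L, p.2 ≠ GT.leaf) (hlbs : ∀ p ∈ L, IsLBS (p.2.map Prod.fst) p.1)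
    (hdec : ∀ p ∈ L, IsDec (p.2.map Prod.snd))
    (hxnl : x.2 ≠ GT.leaf) (hxlbs : IsLBS (x.2.map Prod.fst) x.1)
    (hxdec : IsDec (x.2.map Prod.snd)) : Pre (insSorted x L) := by
  have hmem : ∀ p ∈ insSorted x L, p = x ∨ p ∈ L := by
    intro p hp
    exact List.mem_cons.1 ((insSorted_perm x L).mem_iff.1 hp)
  refine ⟨pairwise_insSorted h1 h2, ?_, ?_, ?_⟩ <;> intro p hp <;>
    rcases hmem p hp with rfl | hp'
  · exact hxnl
  · exact hnl p hp'
  · exact hxlbs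
  · exact hlbs p hp'
  · exact hxdec
  · exact hdec p hp'

theorem lblA_insSorted (x : ℤ × GT Lbl) (L : Forest) :
    lblA (insSorted x L) = x.2.labels + lblA L := by
  rw [lblA_perm (insSorted_perm x L), lblA_cons]

end Main


section Step
open List

theorem pairwise_middle {A B : Forest} {x : ℤ × GT Lbl} (h : (A ++ x :: B).Pairwise RelF) :
    (∀ y ∈ A, RelF y x) ∧ (∀ y ∈ B, RelF x y) ∧ (A ++ B).Pairwise RelF := by
  rw [List.pairwise_append] at h
  have hc := List.pairwise_cons.1 h.2.1
  refine ⟨fun y hy => h.2.2 y hy x (by simp), hc.1, ?_⟩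
  rw [List.pairwise_append]
  exact ⟨h.1, hc.2, fun y hy z hz => Rel_trans (h.2.2 y hy x (by simp)) (hc.1 z hz)⟩

theorem rel_decomp {A B : Forest} {x : ℤ × GT Lbl} (h : (A ++ x :: B).Pairwise RelF) :
    ∀ y ∈ A ++ B, (y ∈ A ∧ RelF y x) ∨ (y ∈ B ∧ RelF x y) := by
  obtain ⟨h1, h2, -⟩ := pairwise_middle h
  intro y hy
  rcases List.mem_append.1 hy with hy' | hy'
  · exact Or.inl ⟨hy', h1 y hy'⟩
  · exact Or.inr ⟨hy', h2 y hy'⟩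

theorem pairwise_right {A B : Forest} {x : ℤ × GT Lbl}
    (h : (A ++ x :: B).Pairwise RelF) : (x :: B).Pairwise RelF :=
  (List.pairwise_append.1 h).2.1

theorem exists_node {t : GT Lbl} (h : t ≠ GT.leaf) : ∃ k l r, t = GT.node k l r := by
  cases t with
  | leaf => exact absurd rfl h
  | node k l r => exact ⟨k, l, r, rfl⟩

theorem root_mem_labels (k : Lbl) (l r : GT Lbl) : k ∈ (GT.node k l r).labels := by
  simp [GT.labels]

theorem node_size_cast (k : Lbl) (t₁ t₂ : GT Lbl) :
    ((GT.node k t₁ t₂).size : ℤ) = (t₁.size : ℤ) + (t₂.size : ℤ) + 1 := by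
  simp only [GT.size]; push_cast; ring

theorem lbs_node_intro {k : Lbl} {l r : GT Lbl} {a : ℤ}
    (h1 : a ≤ k.1.1) (h2 : k.1.1 < a + ((GT.node k l r).size : ℤ))
    (h3 : rootLtA k.1 (l.map Prod.fst)) (h4 : rootGtA k.1 (r.map Prod.fst))
    (h5 : IsLBS (l.map Prod.fst) a) (h6 : IsLBS (r.map Prod.fst) (a + (l.size : ℤ) + 1)) :
    IsLBS ((GT.node k l r).map Prod.fst) a := by
  simp only [GT.map, IsLBS, GT_size_map]
  refine ⟨⟨h1, ?_⟩, h3, h4, h5, h6⟩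
  rw [node_size_cast] at h2
  push_cast
  omega

theorem dec_node_intro {k : Lbl} {l r : GT Lbl}
    (h1 : rootBelow k.2 (l.map Prod.snd)) (h2 : rootBelow k.2 (r.map Prod.snd))
    (h3 : IsDec (l.map Prod.snd)) (h4 : IsDec (r.map Prod.snd)) :
    IsDec ((GT.node k l r).map Prod.snd) := by
  simp only [GT.map, IsDec]; exact ⟨h1, h2, h3, h4⟩

theorem insert_step {s : Forest} {c : Lbl} (hs : Pre s)
    (hfresh : ∀ x ∈ lblA s, x.1 ≠ c.1) (htime : ∀ x ∈ lblA s, x.2 < c.2) :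
    Pre (insertL valF ltF s c) ∧ lblA (insertL valF ltF s c) = c ::ₘ lblA s := by
  obtain ⟨hpw, hnl, hlbs, hdec⟩ := hs
  simp only [insertL, valF, ltF]
  split
  -- ============ CASE: value of c inside the support of a tree (a, t) ============
  case h_1 x a t heq =>
    have hmem := List.mem_of_find?_eq_some heq
    have hpred := List.find?_some heq
    simp only [decide_eq_true_eq] at hpred
    obtain ⟨ha1, ha2⟩ := hpred
    obtain ⟨k, l, r, rfl⟩ := exists_node (hnl (a, t) hmem)
    have hklbs := lbs_node (a := a) (hlbs (a, GT.node k l r) hmem)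
    have hkfresh : k.1 ≠ c.1 := hfresh k (mem_lblA hmem (root_mem_labels k l r))
    have hktime : k.2 < c.2 := htime k (mem_lblA hmem (root_mem_labels k l r))
    obtain ⟨A, B, hsplit⟩ := List.append_of_mem hmem
    subst hsplit
    have hreldec := rel_decomp hpw
    have hrest : (A ++ (a, GT.node k l r) :: B).filter (fun p => decide (p.1 ≠ a))
        = A ++ B := filter_key_ne hpw
    rw [hrest]
    simp only [GT.rootLabel?]
    have hpwAB : (A ++ B).Pairwise RelF := (pairwise_middle hpw).2.2
    have hmemS : ∀ y ∈ A ++ B, y ∈ A ++ (a, GT.node k l r) :: B := by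
      intro y hy; rcases List.mem_append.1 hy with h | h <;> simp [h]
    split
    · -- lt k c : new root with (a,t) as left child
      rename_i hlt
      rw [lexLtB_iff] at hlt
      split
      · -- right neighbor (a', t') captured as right child
        rename_i a' t' heq3
        have hmem3 := List.mem_of_find?_eq_some heq3
        have hpred3 := List.find?_some heq3
        simp only [decide_eq_true_eq] at hpred3
        obtain ⟨k', l', r', rfl⟩ := exists_node (hnl (a', t') (hmemS _ hmem3))
        have hk'lbs := lbs_node (a := a') (hlbs (a', GT.node k' l' r') (hmemS _ hmem3))
        have hk'time : k'.2 < c.2 :=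
          htime k' (mem_lblA (hmemS _ hmem3) (root_mem_labels k' l' r'))
        obtain ⟨A₂, B₂, hAB⟩ := List.append_of_mem hmem3
        have hpwAB2 : (A₂ ++ (a', GT.node k' l' r') :: B₂).Pairwise RelF := hAB ▸ hpwAB
        have hreldec2 := rel_decomp hpwAB2
        have hrest2 : (A ++ B).filter (fun p => decide (p.1 ≠ a')) = A₂ ++ B₂ := by
          rw [hAB]; exact filter_key_ne hpwAB2
        rw [hrest2]
        have hmemS2 : ∀ y ∈ A₂ ++ B₂, y ∈ A ++ B := by
          intro y hy; rw [hAB]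
          rcases List.mem_append.1 hy with h | h <;> simp [h]
        constructor
        · apply pre_insSorted ((pairwise_middle hpwAB2).2.2)
          · intro y hy
            rcases hreldec y (hmemS2 y hy) with ⟨-, h1⟩ | ⟨-, h1⟩
            · exact Or.inl h1
            · right
              have h1' : a + ((GT.node k l r).size : ℤ) + 1 ≤ y.1 := h1
              show a + ((GT.node c (GT.node k l r) (GT.node k' l' r')).size : ℤ) + 1 ≤ y.1
              rw [node_size_cast]
              rcases hreldec2 y hy with ⟨-, h2⟩ | ⟨-, h2⟩
              · have h2' : y.1 + (y.2.size : ℤ) + 1 ≤ a' := h2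
                have hy2 : (0:ℤ) ≤ (y.2.size : ℤ) := by positivity
                omega
              · have h2' : a' + ((GT.node k' l' r').size : ℤ) + 1 ≤ y.1 := h2
                omega
          · intro p hp; exact hnl p (hmemS _ (hmemS2 _ hp))
          · intro p hp; exact hlbs p (hmemS _ (hmemS2 _ hp))
          · intro p hp; exact hdec p (hmemS _ (hmemS2 _ hp))
          · simp
          · show IsLBS ((GT.node c (GT.node k l r) (GT.node k' l' r')).map Prod.fst) a
            apply lbs_node_intro
            · exact ha1
            · rw [node_size_cast]
              have h0 : (0:ℤ) ≤ ((GT.node k' l' r').size : ℤ) := by positivity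
              omega
            · exact hlt
            · exact Or.inl (by have := hk'lbs.1.1; omega)
            · exact hlbs _ hmem
            · have h5 := hlbs _ (hmemS _ hmem3)
              have he : a + ((GT.node k l r).size : ℤ) + 1 = a' := hpred3.symm
              rw [he]; exact h5
          · show IsDec ((GT.node c (GT.node k l r) (GT.node k' l' r')).map Prod.snd)
            exact dec_node_intro hktime hk'time (hdec _ hmem) (hdec _ (hmemS _ hmem3))
        · have hR : lblA (A ++ (a, GT.node k l r) :: B)
              = lblA A + ((GT.node k l r).labels + lblA B) := by
            rw [lblA_append, lblA_cons]
          rw [lblA_insSorted, hR]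
          have key : (GT.node k' l' r').labels + lblA (A₂ ++ B₂) = lblA A + lblA B := by
            have h' : lblA (A ++ B) = lblA A₂ + ((GT.node k' l' r').labels + lblA B₂) := by
              rw [hAB, lblA_append, lblA_cons]
            rw [← lblA_append, h', lblA_append]
            abel
          show (GT.node c (GT.node k l r) (GT.node k' l' r')).labels + lblA (A₂ ++ B₂)
              = c ::ₘ (lblA A + ((GT.node k l r).labels + lblA B))
          rw [show (GT.node c (GT.node k l r) (GT.node k' l' r')).labels
              = c ::ₘ ((GT.node k l r).labels + (GT.node k' l' r').labels) from rfl,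
            Multiset.cons_add]
          congr 1
          calc (GT.node k l r).labels + (GT.node k' l' r').labels + lblA (A₂ ++ B₂)
              = (GT.node k l r).labels
                  + ((GT.node k' l' r').labels + lblA (A₂ ++ B₂)) := by abel
            _ = (GT.node k l r).labels + (lblA A + lblA B) := by rw [key]
            _ = lblA A + ((GT.node k l r).labels + lblA B) := by abel
      · -- no right neighbor
        rename_i heq3
        have hnone := List.find?_eq_none.1 heq3
        constructor
        · apply pre_insSorted hpwAB
          · intro y hy
            rcases hreldec y hy with ⟨-, h1⟩ | ⟨-, h1⟩
            · exact Or.inl h1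
            · right
              have h1' : a + ((GT.node k l r).size : ℤ) + 1 ≤ y.1 := h1
              have hne : ¬(y.1 = a + ((GT.node k l r).size : ℤ) + 1) := by
                have := hnone y hy; simpa using this
              show a + ((GT.node c (GT.node k l r) GT.leaf).size : ℤ) + 1 ≤ y.1
              rw [node_size_cast]
              have hleaf : (((GT.leaf : GT Lbl).size : ℕ) : ℤ) = 0 := by simp [GT.size]
              omega
          · intro p hp; exact hnl p (hmemS _ hp)
          · intro p hp; exact hlbs p (hmemS _ hp)
          · intro p hp; exact hdec p (hmemS _ hp)
          · simp
          · show IsLBS ((GT.node c (GT.node k l r) GT.leaf).map Prod.fst) a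
            apply lbs_node_intro
            · exact ha1
            · rw [node_size_cast]
              omega
            · exact hlt
            · trivial
            · exact hlbs _ hmem
            · trivial
          · show IsDec ((GT.node c (GT.node k l r) GT.leaf).map Prod.snd)
            exact dec_node_intro hktime trivial (hdec _ hmem) trivial
        · have hR : lblA (A ++ (a, GT.node k l r) :: B)
              = lblA A + ((GT.node k l r).labels + lblA B) := by
            rw [lblA_append, lblA_cons]
          rw [lblA_insSorted, hR]
          show (GT.node c (GT.node k l r) GT.leaf).labels + lblA (A ++ B)
              = c ::ₘ (lblA A + ((GT.node k l r).labels + lblA B))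
          rw [show (GT.node c (GT.node k l r) GT.leaf).labels
              = c ::ₘ ((GT.node k l r).labels + 0) from rfl, Multiset.cons_add,
            lblA_append]
          congr 1
          abel
    · -- ¬ lt k c : new root with (a,t) as right child
      rename_i hlt
      have hklt : lexLt c.1 k.1 := by
        rcases lexLt_total hkfresh with h | h
        · exact absurd (lexLtB_iff.2 h) hlt
        · exact h
      split
      · -- left neighbor (a'', t'') captured as left child
        rename_i a'' t'' heq3
        have hmem3 := List.mem_of_find?_eq_some heq3
        have hpred3 := List.find?_some heq3
        simp only [decide_eq_true_eq] at hpred3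
        obtain ⟨k'', l'', r'', rfl⟩ := exists_node (hnl (a'', t'') (hmemS _ hmem3))
        have hk''lbs := lbs_node (a := a'') (hlbs (a'', GT.node k'' l'' r'') (hmemS _ hmem3))
        have hk''time : k''.2 < c.2 :=
          htime k'' (mem_lblA (hmemS _ hmem3) (root_mem_labels k'' l'' r''))
        have hpredE : a'' + ((GT.node k'' l'' r'').size : ℤ) = a - 1 := hpred3
        obtain ⟨A₂, B₂, hAB⟩ := List.append_of_mem hmem3
        have hpwAB2 : (A₂ ++ (a'', GT.node k'' l'' r'') :: B₂).Pairwise RelF := hAB ▸ hpwAB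
        have hreldec2 := rel_decomp hpwAB2
        have hrest2 : (A ++ B).filter (fun p => decide (p.1 ≠ a'')) = A₂ ++ B₂ := by
          rw [hAB]; exact filter_key_ne hpwAB2
        rw [hrest2]
        have hmemS2 : ∀ y ∈ A₂ ++ B₂, y ∈ A ++ B := by
          intro y hy; rw [hAB]
          rcases List.mem_append.1 hy with h | h <;> simp [h]
        constructor
        · apply pre_insSorted ((pairwise_middle hpwAB2).2.2)
          · intro y hy
            rcases hreldec2 y hy with ⟨-, h2⟩ | ⟨-, h2⟩
            · exact Or.inl h2
            · right
              have h2' : a'' + ((GT.node k'' l'' r'').size : ℤ) + 1 ≤ y.1 := h2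
              show a'' + ((GT.node c (GT.node k'' l'' r'') (GT.node k l r)).size : ℤ) + 1 ≤ y.1
              rw [node_size_cast]
              rcases hreldec y (hmemS2 y hy) with ⟨-, h1⟩ | ⟨-, h1⟩
              · have h1' : y.1 + (y.2.size : ℤ) + 1 ≤ a := h1
                have hy2 : (0:ℤ) ≤ (y.2.size : ℤ) := by positivity
                omega
              · have h1' : a + ((GT.node k l r).size : ℤ) + 1 ≤ y.1 := h1
                omega
          · intro p hp; exact hnl p (hmemS _ (hmemS2 _ hp))
          · intro p hp; exact hlbs p (hmemS _ (hmemS2 _ hp))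
          · intro p hp; exact hdec p (hmemS _ (hmemS2 _ hp))
          · simp
          · show IsLBS ((GT.node c (GT.node k'' l'' r'') (GT.node k l r)).map Prod.fst) a''
            apply lbs_node_intro
            · have h0 : (0:ℤ) ≤ ((GT.node k'' l'' r'').size : ℤ) := by positivity
              omega
            · rw [node_size_cast]
              omega
            · exact Or.inl (by have := hk''lbs.1.2; omega)
            · exact hklt
            · exact hlbs _ (hmemS _ hmem3)
            · have h5 := hlbs _ hmem
              have he : a'' + ((GT.node k'' l'' r'').size : ℤ) + 1 = a := by omega
              rw [he]; exact h5
          · show IsDec ((GT.node c (GT.node k'' l'' r'') (GT.node k l r)).map Prod.snd)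
            exact dec_node_intro hk''time hktime (hdec _ (hmemS _ hmem3)) (hdec _ hmem)
        · have hR : lblA (A ++ (a, GT.node k l r) :: B)
              = lblA A + ((GT.node k l r).labels + lblA B) := by
            rw [lblA_append, lblA_cons]
          rw [lblA_insSorted, hR]
          have key : (GT.node k'' l'' r'').labels + lblA (A₂ ++ B₂) = lblA A + lblA B := by
            have h' : lblA (A ++ B) = lblA A₂ + ((GT.node k'' l'' r'').labels + lblA B₂) := by
              rw [hAB, lblA_append, lblA_cons]
            rw [← lblA_append, h', lblA_append]
            abel
          show (GT.node c (GT.node k'' l'' r'') (GT.node k l r)).labels + lblA (A₂ ++ B₂)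
              = c ::ₘ (lblA A + ((GT.node k l r).labels + lblA B))
          rw [show (GT.node c (GT.node k'' l'' r'') (GT.node k l r)).labels
              = c ::ₘ ((GT.node k'' l'' r'').labels + (GT.node k l r).labels) from rfl,
            Multiset.cons_add]
          congr 1
          calc (GT.node k'' l'' r'').labels + (GT.node k l r).labels + lblA (A₂ ++ B₂)
              = (GT.node k l r).labels
                  + ((GT.node k'' l'' r'').labels + lblA (A₂ ++ B₂)) := by abel
            _ = (GT.node k l r).labels + (lblA A + lblA B) := by rw [key]
            _ = lblA A + ((GT.node k l r).labels + lblA B) := by abel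
      · -- no left neighbor
        rename_i heq3
        have hnone := List.find?_eq_none.1 heq3
        constructor
        · apply pre_insSorted hpwAB
          · intro y hy
            rcases hreldec y hy with ⟨-, h1⟩ | ⟨-, h1⟩
            · left
              have h1' : y.1 + (y.2.size : ℤ) + 1 ≤ a := h1
              have hne : ¬(y.1 + (y.2.size : ℤ) = a - 1) := by
                have := hnone y hy; simpa using this
              show y.1 + (y.2.size : ℤ) + 1 ≤ a - 1
              omega
            · right
              have h1' : a + ((GT.node k l r).size : ℤ) + 1 ≤ y.1 := h1
              show (a - 1) + ((GT.node c GT.leaf (GT.node k l r)).size : ℤ) + 1 ≤ y.1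
              rw [node_size_cast]
              have hleaf : (((GT.leaf : GT Lbl).size : ℕ) : ℤ) = 0 := by simp [GT.size]
              omega
          · intro p hp; exact hnl p (hmemS _ hp)
          · intro p hp; exact hlbs p (hmemS _ hp)
          · intro p hp; exact hdec p (hmemS _ hp)
          · simp
          · show IsLBS ((GT.node c GT.leaf (GT.node k l r)).map Prod.fst) (a - 1)
            apply lbs_node_intro
            · omega
            · rw [node_size_cast]
              have hleaf : (((GT.leaf : GT Lbl).size : ℕ) : ℤ) = 0 := by simp [GT.size]
              omega
            · trivial
            · exact hklt
            · trivial
            · have h5 := hlbs _ hmem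
              have he : (a - 1) + (((GT.leaf : GT Lbl).size : ℕ) : ℤ) + 1 = a := by
                simp [GT.size]
              rw [he]; exact h5
          · show IsDec ((GT.node c GT.leaf (GT.node k l r)).map Prod.snd)
            exact dec_node_intro trivial hktime trivial (hdec _ hmem)
        · have hR : lblA (A ++ (a, GT.node k l r) :: B)
              = lblA A + ((GT.node k l r).labels + lblA B) := by
            rw [lblA_append, lblA_cons]
          rw [lblA_insSorted, hR]
          show (GT.node c GT.leaf (GT.node k l r)).labels + lblA (A ++ B)
              = c ::ₘ (lblA A + ((GT.node k l r).labels + lblA B))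
          rw [show (GT.node c GT.leaf (GT.node k l r)).labels
              = c ::ₘ ((0 : Multiset Lbl) + (GT.node k l r).labels) from rfl,
            Multiset.cons_add, lblA_append]
          congr 1
          abel
  -- ============ CASE: value of c outside the support ============
  case h_2 x heq =>
    have hnoneC := List.find?_eq_none.1 heq
    split
    · -- trees on both sides
      rename_i a t b t' heqlo heqro
      have hmemL := List.mem_of_find?_eq_some heqlo
      have hpredL := List.find?_some heqlo
      have hmemR := List.mem_of_find?_eq_some heqro
      have hpredR := List.find?_some heqro
      simp only [decide_eq_true_eq] at hpredL hpredR
      obtain ⟨k, l, r, rfl⟩ := exists_node (hnl (a, t) hmemL)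
      obtain ⟨k', l', r', rfl⟩ := exists_node (hnl (b, t') hmemR)
      have hklbs := lbs_node (a := a) (hlbs (a, GT.node k l r) hmemL)
      have hk'lbs := lbs_node (a := b) (hlbs (b, GT.node k' l' r') hmemR)
      have hktime : k.2 < c.2 := htime k (mem_lblA hmemL (root_mem_labels k l r))
      have hk'time : k'.2 < c.2 := htime k' (mem_lblA hmemR (root_mem_labels k' l' r'))
      obtain ⟨A, B, hsplit⟩ := List.append_of_mem hmemL
      subst hsplit
      have hmid := pairwise_middle hpw
      have hRne : (b, GT.node k' l' r') ≠ (a, GT.node k l r) := by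
        intro hcon
        have : b = a := congrArg Prod.fst hcon
        have h0 : (0:ℤ) ≤ ((GT.node k l r).size : ℤ) := by positivity
        omega
      have hRmem : (b, GT.node k' l' r') ∈ A ++ B := by
        rcases List.mem_append.1 hmemR with h | h
        · exact List.mem_append.2 (Or.inl h)
        · rcases List.mem_cons.1 h with h' | h'
          · exact absurd h' hRne
          · exact List.mem_append.2 (Or.inr h')
      have hRinB : (b, GT.node k' l' r') ∈ B := by
        rcases rel_decomp hpw _ hRmem with ⟨-, h1⟩ | ⟨h1, -⟩
        · exfalso
          have h1' : b + ((GT.node k' l' r').size : ℤ) + 1 ≤ a := h1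
          have h0 : (0:ℤ) ≤ ((GT.node k' l' r').size : ℤ) := by positivity
          have h0' : (0:ℤ) ≤ ((GT.node k l r).size : ℤ) := by positivity
          omega
        · exact h1
      obtain ⟨B₁, B₂, hBsplit⟩ := List.append_of_mem hRinB
      have hB1nil : B₁ = [] := by
        rw [List.eq_nil_iff_forall_not_mem]
        intro p hp
        have hpB : p ∈ B := by rw [hBsplit]; simp [hp]
        have h1 : RelF (a, GT.node k l r) p := hmid.2.1 p hpB
        have hpwB : B.Pairwise RelF := (List.pairwise_cons.1 (pairwise_right hpw)).2
        have h2 : RelF p (b, GT.node k' l' r') :=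
          (pairwise_middle (hBsplit ▸ hpwB)).1 p (by simp [hp])
        have h1' : a + ((GT.node k l r).size : ℤ) + 1 ≤ p.1 := h1
        have h2' : p.1 + (p.2.size : ℤ) + 1 ≤ b := h2
        have h0 : (0:ℤ) ≤ (p.2.size : ℤ) := by positivity
        omega
      subst hB1nil
      simp only [List.nil_append] at hBsplit
      subst hBsplit
      -- now s = A ++ (a,T) :: (b,T') :: B₂
      have hA1 : ∀ y ∈ A, y.1 + (y.2.size : ℤ) + 1 ≤ a := fun y hy => hmid.1 y hy
      have hB2 : ∀ y ∈ B₂, b + ((GT.node k' l' r').size : ℤ) + 1 ≤ y.1 := by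
        intro y hy
        exact (pairwise_middle (pairwise_middle hpw).2.2).2.1 y hy
      have hTsz1 : (1:ℤ) ≤ ((GT.node k l r).size : ℤ) := by
        rw [node_size_cast]; omega
      have hfilt : (A ++ (a, GT.node k l r) :: (b, GT.node k' l' r') :: B₂).filter
          (fun p => decide ¬(p.1 + (p.2.size : ℤ) = c.1.1 ∨ p.1 = c.1.1 + 1)) = A ++ B₂ := by
        rw [List.filter_append]
        congr 1
        · apply List.filter_eq_self.2
          intro y hy
          have := hA1 y hy
          simp only [decide_eq_true_eq, not_or]
          constructor <;> omega
        · rw [List.filter_cons_of_neg (by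
            simp only [decide_eq_true_eq, not_not]
            exact Or.inl hpredL)]
          rw [List.filter_cons_of_neg (by
            simp only [decide_eq_true_eq, not_not]
            exact Or.inr hpredR)]
          apply List.filter_eq_self.2
          intro y hy
          have := hB2 y hy
          have h0 : (0:ℤ) ≤ (y.2.size : ℤ) := by positivity
          have h0' : (0:ℤ) ≤ ((GT.node k' l' r').size : ℤ) := by positivity
          simp only [decide_eq_true_eq, not_or]
          constructor <;> omega
      rw [hfilt]
      have hpwL : (A ++ B₂).Pairwise RelF :=
        (pairwise_middle (pairwise_middle hpw).2.2).2.2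
      have hmemS : ∀ y ∈ A ++ B₂, y ∈ A ++ (a, GT.node k l r) :: (b, GT.node k' l' r') :: B₂ := by
        intro y hy; rcases List.mem_append.1 hy with h | h <;> simp [h]
      constructor
      · apply pre_insSorted hpwL
        · intro y hy
          rcases List.mem_append.1 hy with h | h
          · exact Or.inl (hA1 y h)
          · right
            have := hB2 y h
            show a + ((GT.node c (GT.node k l r) (GT.node k' l' r')).size : ℤ) + 1 ≤ y.1
            rw [node_size_cast]
            omega
        · intro p hp; exact hnl p (hmemS _ hp)
        · intro p hp; exact hlbs p (hmemS _ hp)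
        · intro p hp; exact hdec p (hmemS _ hp)
        · simp
        · show IsLBS ((GT.node c (GT.node k l r) (GT.node k' l' r')).map Prod.fst) a
          apply lbs_node_intro
          · omega
          · rw [node_size_cast]
            have h0' : (0:ℤ) ≤ ((GT.node k' l' r').size : ℤ) := by positivity
            omega
          · exact Or.inl (by have := hklbs.1.2; omega)
          · exact Or.inl (by have := hk'lbs.1.1; omega)
          · exact hlbs _ hmemL
          · have h5 := hlbs _ hmemR
            have he : a + ((GT.node k l r).size : ℤ) + 1 = b := by omega
            rw [he]; exact h5
        · show IsDec ((GT.node c (GT.node k l r) (GT.node k' l' r')).map Prod.snd)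
          exact dec_node_intro hktime hk'time (hdec _ hmemL) (hdec _ hmemR)
      · have hR : lblA (A ++ (a, GT.node k l r) :: (b, GT.node k' l' r') :: B₂)
            = lblA A + ((GT.node k l r).labels
                + ((GT.node k' l' r').labels + lblA B₂)) := by
          rw [lblA_append, lblA_cons, lblA_cons]
        rw [lblA_insSorted, hR, lblA_append]
        show (GT.node c (GT.node k l r) (GT.node k' l' r')).labels + (lblA A + lblA B₂)
            = c ::ₘ (lblA A + ((GT.node k l r).labels
                + ((GT.node k' l' r').labels + lblA B₂)))
        rw [show (GT.node c (GT.node k l r) (GT.node k' l' r')).labels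
            = c ::ₘ ((GT.node k l r).labels + (GT.node k' l' r').labels) from rfl,
          Multiset.cons_add]
        congr 1
        abel
    · -- only a left tree
      rename_i a t heqlo heqro
      have hmemL := List.mem_of_find?_eq_some heqlo
      have hpredL := List.find?_some heqlo
      have hnoneR := List.find?_eq_none.1 heqro
      simp only [decide_eq_true_eq] at hpredL
      obtain ⟨k, l, r, rfl⟩ := exists_node (hnl (a, t) hmemL)
      have hklbs := lbs_node (a := a) (hlbs (a, GT.node k l r) hmemL)
      have hktime : k.2 < c.2 := htime k (mem_lblA hmemL (root_mem_labels k l r))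
      obtain ⟨A, B, hsplit⟩ := List.append_of_mem hmemL
      subst hsplit
      have hmid := pairwise_middle hpw
      have hTsz1 : (1:ℤ) ≤ ((GT.node k l r).size : ℤ) := by
        rw [node_size_cast]; omega
      have hBlow : ∀ y ∈ B, a + ((GT.node k l r).size : ℤ) + 1 ≤ y.1 ∧ y.1 ≠ c.1.1 + 1 := by
        intro y hy
        refine ⟨hmid.2.1 y hy, ?_⟩
        have := hnoneR y (by simp [hy])
        simpa using this
      have hfilt : (A ++ (a, GT.node k l r) :: B).filter
          (fun p => decide ¬(p.1 + (p.2.size : ℤ) = c.1.1 ∨ p.1 = c.1.1 + 1)) = A ++ B := by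
        rw [List.filter_append]
        congr 1
        · apply List.filter_eq_self.2
          intro y hy
          have := hmid.1 y hy
          have h1 : y.1 + (y.2.size : ℤ) + 1 ≤ a := this
          have h0 : (0:ℤ) ≤ (y.2.size : ℤ) := by positivity
          simp only [decide_eq_true_eq, not_or]
          constructor <;> omega
        · rw [List.filter_cons_of_neg (by
            simp only [decide_eq_true_eq, not_not]
            exact Or.inl hpredL)]
          apply List.filter_eq_self.2
          intro y hy
          obtain ⟨h1, h2⟩ := hBlow y hy
          have h0 : (0:ℤ) ≤ (y.2.size : ℤ) := by positivity
          simp only [decide_eq_true_eq, not_or]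
          constructor <;> omega
      rw [hfilt]
      have hmemS : ∀ y ∈ A ++ B, y ∈ A ++ (a, GT.node k l r) :: B := by
        intro y hy; rcases List.mem_append.1 hy with h | h <;> simp [h]
      constructor
      · apply pre_insSorted hmid.2.2
        · intro y hy
          rcases List.mem_append.1 hy with h | h
          · exact Or.inl (hmid.1 y h)
          · right
            obtain ⟨h1, h2⟩ := hBlow y h
            show a + ((GT.node c (GT.node k l r) GT.leaf).size : ℤ) + 1 ≤ y.1
            rw [node_size_cast]
            have hleaf : (((GT.leaf : GT Lbl).size : ℕ) : ℤ) = 0 := by simp [GT.size]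
            omega
        · intro p hp; exact hnl p (hmemS _ hp)
        · intro p hp; exact hlbs p (hmemS _ hp)
        · intro p hp; exact hdec p (hmemS _ hp)
        · simp
        · show IsLBS ((GT.node c (GT.node k l r) GT.leaf).map Prod.fst) a
          apply lbs_node_intro
          · omega
          · rw [node_size_cast]
            have hleaf : (((GT.leaf : GT Lbl).size : ℕ) : ℤ) = 0 := by simp [GT.size]
            omega
          · exact Or.inl (by have := hklbs.1.2; omega)
          · trivial
          · exact hlbs _ hmemL
          · trivial
        · show IsDec ((GT.node c (GT.node k l r) GT.leaf).map Prod.snd)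
          exact dec_node_intro hktime trivial (hdec _ hmemL) trivial
      · have hR : lblA (A ++ (a, GT.node k l r) :: B)
            = lblA A + ((GT.node k l r).labels + lblA B) := by
          rw [lblA_append, lblA_cons]
        rw [lblA_insSorted, hR, lblA_append]
        show (GT.node c (GT.node k l r) GT.leaf).labels + (lblA A + lblA B)
            = c ::ₘ (lblA A + ((GT.node k l r).labels + lblA B))
        rw [show (GT.node c (GT.node k l r) GT.leaf).labels
            = c ::ₘ ((GT.node k l r).labels + 0) from rfl, Multiset.cons_add]
        congr 1
        abel
    · -- only a right tree
      rename_i b t' heqlo heqro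
      have hnoneL := List.find?_eq_none.1 heqlo
      have hmemR := List.mem_of_find?_eq_some heqro
      have hpredR := List.find?_some heqro
      simp only [decide_eq_true_eq] at hpredR
      obtain ⟨k', l', r', rfl⟩ := exists_node (hnl (b, t') hmemR)
      have hk'lbs := lbs_node (a := b) (hlbs (b, GT.node k' l' r') hmemR)
      have hk'time : k'.2 < c.2 := htime k' (mem_lblA hmemR (root_mem_labels k' l' r'))
      obtain ⟨A, B, hsplit⟩ := List.append_of_mem hmemR
      subst hsplit
      have hmid := pairwise_middle hpw
      have hAhigh : ∀ y ∈ A, y.1 + (y.2.size : ℤ) + 1 ≤ b ∧ y.1 + (y.2.size : ℤ) ≠ c.1.1 := by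
        intro y hy
        refine ⟨hmid.1 y hy, ?_⟩
        have := hnoneL y (by simp [hy])
        simpa using this
      have hfilt : (A ++ (b, GT.node k' l' r') :: B).filter
          (fun p => decide ¬(p.1 + (p.2.size : ℤ) = c.1.1 ∨ p.1 = c.1.1 + 1)) = A ++ B := by
        rw [List.filter_append]
        congr 1
        · apply List.filter_eq_self.2
          intro y hy
          obtain ⟨h1, h2⟩ := hAhigh y hy
          have h0 : (0:ℤ) ≤ (y.2.size : ℤ) := by positivity
          simp only [decide_eq_true_eq, not_or]
          constructor <;> omega
        · rw [List.filter_cons_of_neg (by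
            simp only [decide_eq_true_eq, not_not]
            exact Or.inr hpredR)]
          apply List.filter_eq_self.2
          intro y hy
          have h1 : b + ((GT.node k' l' r').size : ℤ) + 1 ≤ y.1 := hmid.2.1 y hy
          have h0 : (0:ℤ) ≤ (y.2.size : ℤ) := by positivity
          have h0' : (0:ℤ) ≤ ((GT.node k' l' r').size : ℤ) := by positivity
          simp only [decide_eq_true_eq, not_or]
          constructor <;> omega
      rw [hfilt]
      have hmemS : ∀ y ∈ A ++ B, y ∈ A ++ (b, GT.node k' l' r') :: B := by
        intro y hy; rcases List.mem_append.1 hy with h | h <;> simp [h]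
      constructor
      · apply pre_insSorted hmid.2.2
        · intro y hy
          rcases List.mem_append.1 hy with h | h
          · left
            obtain ⟨h1, h2⟩ := hAhigh y h
            show y.1 + (y.2.size : ℤ) + 1 ≤ c.1.1
            omega
          · right
            have h1 : b + ((GT.node k' l' r').size : ℤ) + 1 ≤ y.1 := hmid.2.1 y h
            show c.1.1 + ((GT.node c GT.leaf (GT.node k' l' r')).size : ℤ) + 1 ≤ y.1
            rw [node_size_cast]
            have hleaf : (((GT.leaf : GT Lbl).size : ℕ) : ℤ) = 0 := by simp [GT.size]
            omega
        · intro p hp; exact hnl p (hmemS _ hp)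
        · intro p hp; exact hlbs p (hmemS _ hp)
        · intro p hp; exact hdec p (hmemS _ hp)
        · simp
        · show IsLBS ((GT.node c GT.leaf (GT.node k' l' r')).map Prod.fst) c.1.1
          apply lbs_node_intro
          · omega
          · rw [node_size_cast]
            have hleaf : (((GT.leaf : GT Lbl).size : ℕ) : ℤ) = 0 := by simp [GT.size]
            have h0' : (0:ℤ) ≤ ((GT.node k' l' r').size : ℤ) := by positivity
            omega
          · trivial
          · exact Or.inl (by have := hk'lbs.1.1; omega)
          · trivial
          · have h5 := hlbs _ hmemR
            have he : c.1.1 + (((GT.leaf : GT Lbl).size : ℕ) : ℤ) + 1 = b := by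
              simp [GT.size]; omega
            rw [he]; exact h5
        · show IsDec ((GT.node c GT.leaf (GT.node k' l' r')).map Prod.snd)
          exact dec_node_intro trivial hk'time trivial (hdec _ hmemR)
      · have hR : lblA (A ++ (b, GT.node k' l' r') :: B)
            = lblA A + ((GT.node k' l' r').labels + lblA B) := by
          rw [lblA_append, lblA_cons]
        rw [lblA_insSorted, hR, lblA_append]
        show (GT.node c GT.leaf (GT.node k' l' r')).labels + (lblA A + lblA B)
            = c ::ₘ (lblA A + ((GT.node k' l' r').labels + lblA B))
        rw [show (GT.node c GT.leaf (GT.node k' l' r')).labels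
            = c ::ₘ ((0 : Multiset Lbl) + (GT.node k' l' r').labels) from rfl,
          Multiset.cons_add]
        congr 1
        abel
    · -- isolated new node
      rename_i heqlo heqro
      have hnoneL := List.find?_eq_none.1 heqlo
      have hnoneR := List.find?_eq_none.1 heqro
      have hfilt : s.filter
          (fun p => decide ¬(p.1 + (p.2.size : ℤ) = c.1.1 ∨ p.1 = c.1.1 + 1)) = s := by
        apply List.filter_eq_self.2
        intro y hy
        have h1 := hnoneL y hy
        have h2 := hnoneR y hy
        simp only [decide_eq_true_eq] at h1 h2 ⊢
        push_neg
        exact ⟨by simpa using h1, by simpa using h2⟩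
      rw [hfilt]
      constructor
      · apply pre_insSorted hpw
        · intro y hy
          have h1 := hnoneC y hy
          have h2 := hnoneL y hy
          have h3 := hnoneR y hy
          simp only [decide_eq_true_eq] at h1 h2 h3
          have h2' : ¬(y.1 + (y.2.size : ℤ) = c.1.1) := by simpa using h2
          have h3' : ¬(y.1 = c.1.1 + 1) := by simpa using h3
          rw [not_and, not_lt] at h1
          by_cases hc1 : y.1 ≤ c.1.1
          · left
            have := h1 hc1
            show y.1 + (y.2.size : ℤ) + 1 ≤ c.1.1
            omega
          · right
            show c.1.1 + ((GT.node c GT.leaf GT.leaf).size : ℤ) + 1 ≤ y.1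
            rw [node_size_cast]
            have hleaf : (((GT.leaf : GT Lbl).size : ℕ) : ℤ) = 0 := by simp [GT.size]
            omega
        · intro p hp; exact hnl p hp
        · intro p hp; exact hlbs p hp
        · intro p hp; exact hdec p hp
        · simp
        · show IsLBS ((GT.node c GT.leaf GT.leaf).map Prod.fst) c.1.1
          apply lbs_node_intro
          · omega
          · rw [node_size_cast]
            have hleaf : (((GT.leaf : GT Lbl).size : ℕ) : ℤ) = 0 := by simp [GT.size]
            omega
          · trivial
          · trivial
          · trivial
          · trivial
        · show IsDec ((GT.node c GT.leaf GT.leaf).map Prod.snd)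
          exact dec_node_intro trivial trivial trivial trivial
      · rw [lblA_insSorted]
        show (GT.node c GT.leaf GT.leaf).labels + lblA s = c ::ₘ lblA s
        rw [show (GT.node c GT.leaf GT.leaf).labels
            = c ::ₘ ((0 : Multiset Lbl) + 0) from rfl, Multiset.cons_add]
        simp

end Step


section Fwd
open List

def enumL (W : List (ℤ × ℕ)) : List Lbl := W.zipIdx.map (fun nc => (nc.1, nc.2 + 1))

theorem enumL_snoc (W : List (ℤ × ℕ)) (c : ℤ × ℕ) :
    enumL (W ++ [c]) = enumL W ++ [(c, W.length + 1)] := by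
  unfold enumL
  rw [List.zipIdx_append]
  simp [List.zipIdx]

theorem Phi2_snoc (W : List (ℤ × ℕ)) (c : ℤ × ℕ) :
    Phi2 (W ++ [c]) = insertL valF ltF (Phi2 W) (c, W.length + 1) := by
  have e1 : Phi2 (W ++ [c]) = List.foldl (insertL valF ltF) [] (enumL (W ++ [c])) := rfl
  have e2 : Phi2 W = List.foldl (insertL valF ltF) [] (enumL W) := rfl
  rw [e1, e2, enumL_snoc, List.foldl_append]
  rfl

theorem mem_enumL_iff {W : List (ℤ × ℕ)} {x : Lbl} :
    x ∈ enumL W ↔ ∃ j : ℕ, ∃ h : j < W.length, x = (W[j], j + 1) := by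
  unfold enumL
  constructor
  · intro hx
    obtain ⟨nc, hnc, rfl⟩ := List.mem_map.1 hx
    obtain ⟨j, hj, rfl⟩ := List.mem_iff_getElem.1 hnc
    refine ⟨j, by simpa using hj, ?_⟩
    simp [List.getElem_zipIdx]
  · rintro ⟨j, hj, rfl⟩
    refine List.mem_map.2 ⟨(W[j], j), ?_, rfl⟩
    exact List.mem_iff_getElem.2 ⟨j, by simpa using hj, by simp [List.getElem_zipIdx]⟩
  
theorem fwd (W : List (ℤ × ℕ)) (hW : W.Nodup) :
    Pre (Phi2 W) ∧ lblA (Phi2 W) = ↑(enumL W) := by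
  induction W using List.reverseRecOn with
  | nil =>
    have e : Phi2 [] = [] := rfl
    rw [e]
    exact ⟨⟨List.Pairwise.nil, by simp, by simp, by simp⟩, rfl⟩
  | append_singleton W c ih =>
    have hW' : W.Nodup := (List.nodup_append.1 hW).1
    have hc : c ∉ W := by
      intro hcon
      rcases List.nodup_append.1 hW with ⟨-, -, hdisj⟩
      exact hdisj c hcon c (by simp) rfl
    obtain ⟨h1, h2⟩ := ih hW'
    rw [Phi2_snoc]
    have hfresh : ∀ x ∈ lblA (Phi2 W), x.1 ≠ (c, W.length + 1).1 := by
      rw [h2]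
      intro x hx
      obtain ⟨j, hj, rfl⟩ := mem_enumL_iff.1 (by exact_mod_cast hx)
      intro hcon
      apply hc
      have he : W[j] = c := by simpa using hcon
      rw [← he]
      exact List.getElem_mem _
    have htime : ∀ x ∈ lblA (Phi2 W), x.2 < (c, W.length + 1).2 := by
      rw [h2]
      intro x hx
      obtain ⟨j, hj, rfl⟩ := mem_enumL_iff.1 (by exact_mod_cast hx)
      simpa using Nat.add_lt_add_right hj 1
    obtain ⟨h3, h4⟩ := insert_step h1 hfresh htime
    refine ⟨h3, ?_⟩
    rw [h4, h2, enumL_snoc]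
    have : (enumL W ++ [(c, W.length + 1)]) ~ ((c, W.length + 1) :: enumL W) :=
      List.perm_append_singleton _ _
    rw [Multiset.coe_eq_coe.2 this]
    rfl

theorem sum_sizes_eq (W : List (ℤ × ℕ)) (hW : W.Nodup) :
    ((Phi2 W).map (fun p => p.2.size)).sum = W.length := by
  have h := (fwd W hW).2
  have := congrArg Multiset.card h
  rw [card_lblA] at this
  simpa [enumL] using this

theorem fwd_good (W : List (ℤ × ℕ)) (hW : W.Nodup) : GoodPair (Phi2 W) := by
  obtain ⟨⟨h1, h2, h3, h4⟩, h5⟩ := fwd W hW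
  refine ⟨chain'_iff_pairwise_rel.2 h1, h2, h3, ?_, h4, ?_⟩
  · rw [lblA_map_fst, h5]
    have : (↑(enumL W) : Multiset Lbl).map Prod.fst = ↑W := by
      rw [Multiset.map_coe]
      congr 1
      unfold enumL
      rw [List.map_map]
      have : (Prod.fst ∘ fun nc : (ℤ × ℕ) × ℕ => ((nc.1, nc.2 + 1) : Lbl)) = Prod.fst := rfl
      rw [this, List.zipIdx_map_fst]
    rw [this]
    exact Multiset.coe_nodup.2 hW
  · rw [lblA_map_snd, h5, sum_sizes_eq W hW]
    have : (↑(enumL W) : Multiset Lbl).map Prod.snd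
        = ↑((List.range W.length).map (· + 1)) := by
      rw [Multiset.map_coe]
      congr 1
      unfold enumL
      rw [List.map_map]
      have he : (Prod.snd ∘ fun nc : (ℤ × ℕ) × ℕ => ((nc.1, nc.2 + 1) : Lbl))
          = (fun nc : (ℤ × ℕ) × ℕ => nc.2 + 1) := rfl
      rw [he]
      have : (fun nc : (ℤ × ℕ) × ℕ => nc.2 + 1)
          = (fun n : ℕ => n + 1) ∘ Prod.snd := rfl
      rw [this, ← List.map_map, List.zipIdx_map_snd, List.range_eq_range']
    rw [this, ← Multiset.coe_range, Multiset.map_coe]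

theorem enumL_inj {W₁ W₂ : List (ℤ × ℕ)}
    (h : (↑(enumL W₁) : Multiset Lbl) = ↑(enumL W₂)) : W₁ = W₂ := by
  have hlen : W₁.length = W₂.length := by
    have := congrArg Multiset.card h
    simpa [enumL] using this
  apply List.ext_getElem hlen
  intro i h1 h2
  have hmem : ((W₁[i], i + 1) : Lbl) ∈ (↑(enumL W₂) : Multiset Lbl) := by
    rw [← h]
    exact_mod_cast Multiset.mem_coe.2 (mem_enumL_iff.2 ⟨i, h1, rfl⟩)
  obtain ⟨j, hj, hje⟩ := mem_enumL_iff.1 (Multiset.mem_coe.1 hmem)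
  have : j = i := by
    have := congrArg Prod.snd hje
    simpa using this.symm
  subst this
  exact (congrArg Prod.fst hje)

theorem phi_inj {W₁ W₂ : List (ℤ × ℕ)} (h1 : W₁.Nodup) (h2 : W₂.Nodup)
    (h : Phi2 W₁ = Phi2 W₂) : W₁ = W₂ := by
  apply enumL_inj
  rw [← (fwd W₁ h1).2, ← (fwd W₂ h2).2, h]

end Fwd


section Del
open List

theorem find?_append_of_none {p : (ℤ × GT Lbl) → Bool} : ∀ {A : Forest} (B : Forest),
    (∀ x ∈ A, ¬ p x = true) → (A ++ B).find? p = B.find? p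
  | [], B, _ => rfl
  | a :: A, B, h => by
    rw [List.cons_append, List.find?_cons_of_neg (h a (by simp))]
    exact find?_append_of_none B (fun x hx => h x (by simp [hx]))

theorem find?_mid_eq {A B : Forest} {x : ℤ × GT Lbl} {p : ℤ × GT Lbl → Bool}
    (hA : ∀ y ∈ A, ¬ p y = true) (hx : p x = true) :
    (A ++ x :: B).find? p = some x := by
  rw [find?_append_of_none _ hA, List.find?_cons_of_pos hx]

theorem pairwise_insert_mid {A B : Forest} {x : ℤ × GT Lbl} (hAB : (A ++ B).Pairwise RelF)
    (hA : ∀ y ∈ A, RelF y x) (hB : ∀ y ∈ B, RelF x y) : (A ++ x :: B).Pairwise RelF := by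
  rw [List.pairwise_append] at hAB ⊢
  refine ⟨hAB.1, List.pairwise_cons.2 ⟨hB, hAB.2.1⟩, ?_⟩
  intro y hy z hz
  rcases List.mem_cons.1 hz with rfl | hz'
  · exact hA y hy
  · exact hAB.2.2 y hy z hz'

theorem insSorted_mid {A B : Forest} {x : ℤ × GT Lbl}
    (hA : ∀ y ∈ A, y.1 < x.1) (hB : ∀ y ∈ B, x.1 ≤ y.1) :
    insSorted x (A ++ B) = A ++ x :: B := by
  rw [insSorted_append B hA, insSorted_cons_of_le
    (fun y hy => hB y (List.mem_of_mem_head? hy))]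

theorem lexLt_asymm {p q : ℤ × ℕ} (h : lexLt p q) : lexLtB q p = false := by
  rw [← Bool.not_eq_true, lexLtB_iff]
  unfold lexLt at *
  omega

theorem lblA_mem_exists {s : Forest} {x : Lbl} (h : x ∈ lblA s) :
    ∃ p ∈ s, x ∈ p.2.labels := by
  induction s with
  | nil => simp [lblA] at h
  | cons a t ih =>
    rw [lblA_cons, Multiset.mem_add] at h
    rcases h with h | h
    · exact ⟨a, by simp, h⟩
    · obtain ⟨p, hp, hx⟩ := ih h
      exact ⟨p, by simp [hp], hx⟩

theorem delete_step {s : Forest} (hs : Pre s) {c : Lbl}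
    (hc : c ∈ lblA s) (hmax : ∀ x ∈ lblA s, x.2 ≤ c.2)
    (huniq : ∀ x ∈ lblA s, x.2 = c.2 → x = c) :
    ∃ s' : Forest, Pre s' ∧ lblA s = c ::ₘ lblA s' ∧
      insertL valF ltF s' c = s := by
  obtain ⟨hpw, hnl, hlbs, hdec⟩ := hs
  obtain ⟨⟨a, t⟩, hmem, hct⟩ := lblA_mem_exists hc
  obtain ⟨k, l, r, rfl⟩ := exists_node (hnl (a, t) hmem)
  -- the root of this tree must be c itself
  have hk : k = c := by
    apply huniq k (mem_lblA hmem (root_mem_labels k l r))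
    have h1 : c.2 ≤ k.2 := dec_le_root (hdec (a, GT.node k l r) hmem) c hct
    have h2 : k.2 ≤ c.2 := hmax k (mem_lblA hmem (root_mem_labels k l r))
    omega
  subst hk
  have hklbs := lbs_node (a := a) (hlbs (a, GT.node k l r) hmem)
  have hkdec := dec_node (hdec (a, GT.node k l r) hmem)
  obtain ⟨A, B, hsplit⟩ := List.append_of_mem hmem
  subst hsplit
  have hmid := pairwise_middle hpw
  have hA : ∀ y ∈ A, y.1 + (y.2.size : ℤ) + 1 ≤ a := fun y hy => hmid.1 y hy
  have hB : ∀ y ∈ B, a + ((GT.node k l r).size : ℤ) + 1 ≤ y.1 := fun y hy => hmid.2.1 y hy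
  have hpwAB := hmid.2.2
  have hTsz := node_size_cast k l r
  have hroot1 : a ≤ k.1.1 := hklbs.1.1
  have hroot2 : k.1.1 < a + ((GT.node k l r).size : ℤ) := hklbs.1.2
  have hmemA : ∀ y ∈ A, y ∈ A ++ (a, GT.node k l r) :: B := by intro y hy; simp [hy]
  have hmemB : ∀ y ∈ B, y ∈ A ++ (a, GT.node k l r) :: B := by intro y hy; simp [hy]
  rcases eq_or_ne l GT.leaf with rfl | hlne
  · rcases eq_or_ne r GT.leaf with rfl | hrne
    · -- both children empty: remove the tree entirely
      refine ⟨A ++ B, ⟨hpwAB, ?_, ?_, ?_⟩, ?_, ?_⟩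
      · intro p hp
        rcases List.mem_append.1 hp with h | h
        · exact hnl p (hmemA p h)
        · exact hnl p (hmemB p h)
      · intro p hp
        rcases List.mem_append.1 hp with h | h
        · exact hlbs p (hmemA p h)
        · exact hlbs p (hmemB p h)
      · intro p hp
        rcases List.mem_append.1 hp with h | h
        · exact hdec p (hmemA p h)
        · exact hdec p (hmemB p h)
      · rw [lblA_append, lblA_cons, lblA_append]
        show lblA A + ((GT.node k GT.leaf GT.leaf).labels + lblA B)
            = k ::ₘ (lblA A + lblA B)
        rw [show (GT.node k GT.leaf GT.leaf).labels
            = k ::ₘ ((0 : Multiset Lbl) + 0) from rfl]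
        simp only [← Multiset.singleton_add]
        abel
      · -- re-insertion
        have hia : k.1.1 = a := by
          have : ((GT.node k GT.leaf GT.leaf).size : ℤ) = 1 := by
            rw [hTsz]; simp [GT.size]
          omega
        have hAfar : ∀ y ∈ A, y.1 + (y.2.size : ℤ) + 1 ≤ a := hA
        have hBfar : ∀ y ∈ B, a + 2 ≤ y.1 := by
          intro y hy
          have := hB y hy
          have h1 : ((GT.node k GT.leaf GT.leaf).size : ℤ) = 1 := by
            rw [hTsz]; simp [GT.size]
          omega
        simp only [insertL, valF, ltF]
        rw [show (A ++ B).find?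
            (fun p => decide (p.1 ≤ k.1.1 ∧ k.1.1 < p.1 + (p.2.size : ℤ))) = none from
          List.find?_eq_none.2 (by
            intro y hy
            simp only [decide_eq_true_eq, not_and, not_lt]
            intro h1
            rcases List.mem_append.1 hy with h | h
            · have := hAfar y h; omega
            · have := hBfar y h; omega)]
        rw [show (A ++ B).find? (fun p => decide (p.1 + (p.2.size : ℤ) = k.1.1)) = none from
          List.find?_eq_none.2 (by
            intro y hy
            simp only [decide_eq_true_eq]
            have h0 : (0:ℤ) ≤ (y.2.size : ℤ) := by positivity
            rcases List.mem_append.1 hy with h | h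
            · have := hAfar y h; omega
            · have := hBfar y h; omega)]
        rw [show (A ++ B).find? (fun p => decide (p.1 = k.1.1 + 1)) = none from
          List.find?_eq_none.2 (by
            intro y hy
            simp only [decide_eq_true_eq]
            have h0 : (0:ℤ) ≤ (y.2.size : ℤ) := by positivity
            rcases List.mem_append.1 hy with h | h
            · have := hAfar y h; omega
            · have := hBfar y h; omega)]
        rw [show (A ++ B).filter
            (fun p => decide ¬(p.1 + (p.2.size : ℤ) = k.1.1 ∨ p.1 = k.1.1 + 1)) = A ++ B from
          List.filter_eq_self.2 (by
            intro y hy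
            simp only [decide_eq_true_eq, not_or]
            have h0 : (0:ℤ) ≤ (y.2.size : ℤ) := by positivity
            rcases List.mem_append.1 hy with h | h
            · have := hAfar y h; exact ⟨by omega, by omega⟩
            · have := hBfar y h; exact ⟨by omega, by omega⟩)]
        rw [show insSorted (k.1.1, GT.node k GT.leaf GT.leaf) (A ++ B)
            = A ++ (k.1.1, GT.node k GT.leaf GT.leaf) :: B from
          insSorted_mid (by
              intro y hy
              have := hAfar y hy
              have h0 : (0:ℤ) ≤ (y.2.size : ℤ) := by positivity
              omega)
            (by intro y hy; have := hBfar y hy; omega)]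
        rw [hia]
    · -- left child empty, right child nonempty : s' = A ++ (a+1, r) :: B
      obtain ⟨kr, lr, rr, rfl⟩ := exists_node hrne
      have hrsz := node_size_cast kr lr rr
      have hleaf : (((GT.leaf : GT Lbl).size : ℕ) : ℤ) = 0 := by simp [GT.size]
      have hrlbs : IsLBS ((GT.node kr lr rr).map Prod.fst) (a + 1) := by
        have h5 := hklbs.2.2.2.2
        rwa [show a + (((GT.leaf : GT Lbl).size : ℕ) : ℤ) + 1 = a + 1 from by
          rw [hleaf]; ring] at h5
      have hgt : lexLt k.1 kr.1 := hklbs.2.2.1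
      have hpws' : (A ++ (a + 1, GT.node kr lr rr) :: B).Pairwise RelF := by
        apply pairwise_insert_mid hpwAB
        · intro y hy
          have := hA y hy
          show y.1 + (y.2.size : ℤ) + 1 ≤ a + 1
          omega
        · intro y hy
          have := hB y hy
          show (a + 1) + ((GT.node kr lr rr).size : ℤ) + 1 ≤ y.1
          rw [hTsz] at this
          omega
      refine ⟨A ++ (a + 1, GT.node kr lr rr) :: B, ⟨hpws', ?_, ?_, ?_⟩, ?_, ?_⟩
      · intro p hp
        rcases List.mem_append.1 hp with h | h
        · exact hnl p (hmemA p h)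
        · rcases List.mem_cons.1 h with rfl | h
          · simp
          · exact hnl p (hmemB p h)
      · intro p hp
        rcases List.mem_append.1 hp with h | h
        · exact hlbs p (hmemA p h)
        · rcases List.mem_cons.1 h with rfl | h
          · exact hrlbs
          · exact hlbs p (hmemB p h)
      · intro p hp
        rcases List.mem_append.1 hp with h | h
        · exact hdec p (hmemA p h)
        · rcases List.mem_cons.1 h with rfl | h
          · exact hkdec.2.2.2
          · exact hdec p (hmemB p h)
      · rw [lblA_append, lblA_cons, lblA_append, lblA_cons]
        show lblA A + ((GT.node k GT.leaf (GT.node kr lr rr)).labels + lblA B)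
            = k ::ₘ (lblA A + ((GT.node kr lr rr).labels + lblA B))
        rw [show (GT.node k GT.leaf (GT.node kr lr rr)).labels
            = k ::ₘ ((0 : Multiset Lbl) + (GT.node kr lr rr).labels) from rfl]
        simp only [← Multiset.singleton_add]
        abel
      · -- re-insertion
        have hi2 : k.1.1 < a + ((GT.node kr lr rr).size : ℤ) + 1 := by
          rw [hTsz, hleaf] at hroot2; omega
        rcases eq_or_lt_of_le hroot1 with heq | hgta
        · -- i = a : new node out of support, right neighbor captured
          simp only [insertL, valF, ltF]
          rw [show (A ++ (a + 1, GT.node kr lr rr) :: B).find?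
              (fun p => decide (p.1 ≤ k.1.1 ∧ k.1.1 < p.1 + (p.2.size : ℤ))) = none from
            List.find?_eq_none.2 (by
              intro y hy
              simp only [decide_eq_true_eq, not_and, not_lt]
              intro h1
              rcases List.mem_append.1 hy with h | h
              · have := hA y h; omega
              · rcases List.mem_cons.1 h with rfl | h
                · exfalso
                  have : (a:ℤ) + 1 ≤ k.1.1 := h1
                  omega
                · exfalso
                  have h2 := hB y h
                  rw [hTsz, hleaf] at h2
                  have : y.1 ≤ k.1.1 := h1
                  omega)]
          rw [show (A ++ (a + 1, GT.node kr lr rr) :: B).find?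
              (fun p => decide (p.1 + (p.2.size : ℤ) = k.1.1)) = none from
            List.find?_eq_none.2 (by
              intro y hy
              simp only [decide_eq_true_eq]
              rcases List.mem_append.1 hy with h | h
              · have := hA y h; omega
              · rcases List.mem_cons.1 h with rfl | h
                · show ¬((a:ℤ) + 1 + ((GT.node kr lr rr).size : ℤ) = k.1.1)
                  have h0 : (0:ℤ) ≤ ((GT.node kr lr rr).size : ℤ) := by positivity
                  omega
                · have h2 := hB y h
                  rw [hTsz, hleaf] at h2
                  have h0 : (0:ℤ) ≤ (y.2.size : ℤ) := by positivity
                  omega)]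
          rw [show (A ++ (a + 1, GT.node kr lr rr) :: B).find?
              (fun p => decide (p.1 = k.1.1 + 1)) = some (a + 1, GT.node kr lr rr) from
            find?_mid_eq (by
                intro y hy
                simp only [decide_eq_true_eq]
                have := hA y hy
                have h0 : (0:ℤ) ≤ (y.2.size : ℤ) := by positivity
                omega)
              (by simp only [decide_eq_true_eq]; omega)]
          rw [show (A ++ (a + 1, GT.node kr lr rr) :: B).filter
              (fun p => decide ¬(p.1 + (p.2.size : ℤ) = k.1.1 ∨ p.1 = k.1.1 + 1))
              = A ++ B from by
            rw [List.filter_append]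
            congr 1
            · apply List.filter_eq_self.2
              intro y hy
              have := hA y hy
              have h0 : (0:ℤ) ≤ (y.2.size : ℤ) := by positivity
              simp only [decide_eq_true_eq, not_or]
              exact ⟨by omega, by omega⟩
            · rw [List.filter_cons_of_neg (by
                simp only [decide_eq_true_eq, not_not]
                exact Or.inr (by omega))]
              apply List.filter_eq_self.2
              intro y hy
              have := hB y hy
              rw [hTsz, hleaf] at this
              have h0 : (0:ℤ) ≤ (y.2.size : ℤ) := by positivity
              simp only [decide_eq_true_eq, not_or]
              exact ⟨by omega, by omega⟩]
          show insSorted (k.1.1, GT.node k GT.leaf (GT.node kr lr rr)) (A ++ B)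
              = A ++ (a, GT.node k GT.leaf (GT.node kr lr rr)) :: B
          rw [show k.1.1 = a from by omega]
          rw [show insSorted (a, GT.node k GT.leaf (GT.node kr lr rr)) (A ++ B)
              = A ++ (a, GT.node k GT.leaf (GT.node kr lr rr)) :: B from
            insSorted_mid (by
                intro y hy
                have := hA y hy
                have h0 : (0:ℤ) ≤ (y.2.size : ℤ) := by positivity
                omega)
              (by
                intro y hy
                have := hB y hy
                rw [hTsz, hleaf] at this
                omega)]
        · -- i > a : inside r's support
          simp only [insertL, valF, ltF]
          rw [show (A ++ (a + 1, GT.node kr lr rr) :: B).find?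
              (fun p => decide (p.1 ≤ k.1.1 ∧ k.1.1 < p.1 + (p.2.size : ℤ)))
              = some (a + 1, GT.node kr lr rr) from
            find?_mid_eq (by
                intro y hy
                simp only [decide_eq_true_eq, not_and, not_lt]
                intro h1
                have := hA y hy
                omega)
              (by simp only [decide_eq_true_eq]; exact ⟨by omega, by omega⟩)]
          simp only [GT.rootLabel?]
          rw [if_neg (by rw [lexLt_asymm hgt]; simp)]
          rw [show (A ++ (a + 1, GT.node kr lr rr) :: B).filter
              (fun p => decide (p.1 ≠ a + 1)) = A ++ B from filter_key_ne hpws']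
          rw [show (A ++ B).find?
              (fun p => decide (p.1 + (p.2.size : ℤ) = a + 1 - 1)) = none from
            List.find?_eq_none.2 (by
              intro y hy
              simp only [decide_eq_true_eq]
              rcases List.mem_append.1 hy with h | h
              · have := hA y h; omega
              · have := hB y h
                rw [hTsz, hleaf] at this
                have h0 : (0:ℤ) ≤ (y.2.size : ℤ) := by positivity
                omega)]
          rw [show insSorted (a + 1 - 1, GT.node k GT.leaf (GT.node kr lr rr)) (A ++ B)
              = insSorted (a, GT.node k GT.leaf (GT.node kr lr rr)) (A ++ B) from by
            norm_num]
          rw [show insSorted (a, GT.node k GT.leaf (GT.node kr lr rr)) (A ++ B)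
              = A ++ (a, GT.node k GT.leaf (GT.node kr lr rr)) :: B from
            insSorted_mid (by
                intro y hy
                have := hA y hy
                have h0 : (0:ℤ) ≤ (y.2.size : ℤ) := by positivity
                omega)
              (by
                intro y hy
                have := hB y hy
                rw [hTsz, hleaf] at this
                omega)]
  · rcases eq_or_ne r GT.leaf with rfl | hrne
    · -- left child nonempty, right child empty : s' = A ++ (a, l) :: B
      obtain ⟨kl, ll, rl, rfl⟩ := exists_node hlne
      have hlsz := node_size_cast kl ll rl
      have hleaf : (((GT.leaf : GT Lbl).size : ℕ) : ℤ) = 0 := by simp [GT.size]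
      have hllbs : IsLBS ((GT.node kl ll rl).map Prod.fst) a := hklbs.2.2.2.1
      have hltk : lexLt kl.1 k.1 := hklbs.2.1
      have hpws' : (A ++ (a, GT.node kl ll rl) :: B).Pairwise RelF := by
        apply pairwise_insert_mid hpwAB
        · intro y hy
          exact hA y hy
        · intro y hy
          have := hB y hy
          show a + ((GT.node kl ll rl).size : ℤ) + 1 ≤ y.1
          rw [hTsz, hleaf] at this
          omega
      have hi2 : k.1.1 < a + ((GT.node kl ll rl).size : ℤ) + 1 := by
        rw [hTsz, hleaf] at hroot2; omega
      refine ⟨A ++ (a, GT.node kl ll rl) :: B, ⟨hpws', ?_, ?_, ?_⟩, ?_, ?_⟩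
      · intro p hp
        rcases List.mem_append.1 hp with h | h
        · exact hnl p (hmemA p h)
        · rcases List.mem_cons.1 h with rfl | h
          · simp
          · exact hnl p (hmemB p h)
      · intro p hp
        rcases List.mem_append.1 hp with h | h
        · exact hlbs p (hmemA p h)
        · rcases List.mem_cons.1 h with rfl | h
          · exact hllbs
          · exact hlbs p (hmemB p h)
      · intro p hp
        rcases List.mem_append.1 hp with h | h
        · exact hdec p (hmemA p h)
        · rcases List.mem_cons.1 h with rfl | h
          · exact hkdec.2.2.1
          · exact hdec p (hmemB p h)
      · rw [lblA_append, lblA_cons, lblA_append, lblA_cons]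
        show lblA A + ((GT.node k (GT.node kl ll rl) GT.leaf).labels + lblA B)
            = k ::ₘ (lblA A + ((GT.node kl ll rl).labels + lblA B))
        rw [show (GT.node k (GT.node kl ll rl) GT.leaf).labels
            = k ::ₘ ((GT.node kl ll rl).labels + 0) from rfl]
        simp only [← Multiset.singleton_add]
        abel
      · -- re-insertion
        rcases lt_or_ge k.1.1 (a + ((GT.node kl ll rl).size : ℤ)) with hin | hout
        · -- i inside l's support
          simp only [insertL, valF, ltF]
          rw [show (A ++ (a, GT.node kl ll rl) :: B).find?
              (fun p => decide (p.1 ≤ k.1.1 ∧ k.1.1 < p.1 + (p.2.size : ℤ)))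
              = some (a, GT.node kl ll rl) from
            find?_mid_eq (by
                intro y hy
                simp only [decide_eq_true_eq, not_and, not_lt]
                intro h1
                have := hA y hy
                omega)
              (by simp only [decide_eq_true_eq]; exact ⟨by omega, by omega⟩)]
          simp only [GT.rootLabel?]
          rw [if_pos (lexLtB_iff.2 hltk)]
          rw [show (A ++ (a, GT.node kl ll rl) :: B).filter
              (fun p => decide (p.1 ≠ a)) = A ++ B from filter_key_ne hpws']
          rw [show (A ++ B).find?
              (fun p => decide (p.1 = a + ((GT.node kl ll rl).size : ℤ) + 1)) = none from
            List.find?_eq_none.2 (by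
              intro y hy
              simp only [decide_eq_true_eq]
              rcases List.mem_append.1 hy with h | h
              · have := hA y h
                have h0 : (0:ℤ) ≤ (y.2.size : ℤ) := by positivity
                have h0' : (0:ℤ) ≤ ((GT.node kl ll rl).size : ℤ) := by positivity
                omega
              · have := hB y h
                rw [hTsz, hleaf] at this
                omega)]
          rw [show insSorted (a, GT.node k (GT.node kl ll rl) GT.leaf) (A ++ B)
              = A ++ (a, GT.node k (GT.node kl ll rl) GT.leaf) :: B from
            insSorted_mid (by
                intro y hy
                have := hA y hy
                have h0 : (0:ℤ) ≤ (y.2.size : ℤ) := by positivity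
                omega)
              (by
                intro y hy
                have := hB y hy
                rw [hTsz, hleaf] at this
                omega)]
        · -- i = a + l.size : out of support, left neighbor captured
          have hieq : k.1.1 = a + ((GT.node kl ll rl).size : ℤ) := by omega
          simp only [insertL, valF, ltF]
          rw [show (A ++ (a, GT.node kl ll rl) :: B).find?
              (fun p => decide (p.1 ≤ k.1.1 ∧ k.1.1 < p.1 + (p.2.size : ℤ))) = none from
            List.find?_eq_none.2 (by
              intro y hy
              simp only [decide_eq_true_eq, not_and, not_lt]
              intro h1
              rcases List.mem_append.1 hy with h | h
              · have := hA y h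
                omega
              · rcases List.mem_cons.1 h with rfl | h
                · show k.1.1 ≥ a + ((GT.node kl ll rl).size : ℤ)
                  omega
                · exfalso
                  have := hB y h
                  rw [hTsz, hleaf] at this
                  have : y.1 ≤ k.1.1 := h1
                  omega)]
          rw [show (A ++ (a, GT.node kl ll rl) :: B).find?
              (fun p => decide (p.1 + (p.2.size : ℤ) = k.1.1))
              = some (a, GT.node kl ll rl) from
            find?_mid_eq (by
                intro y hy
                simp only [decide_eq_true_eq]
                have := hA y hy
                have h0 : (0:ℤ) ≤ ((GT.node kl ll rl).size : ℤ) := by positivity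
                omega)
              (by simp only [decide_eq_true_eq]; omega)]
          rw [show (A ++ (a, GT.node kl ll rl) :: B).find?
              (fun p => decide (p.1 = k.1.1 + 1)) = none from
            List.find?_eq_none.2 (by
              intro y hy
              simp only [decide_eq_true_eq]
              rcases List.mem_append.1 hy with h | h
              · have := hA y h
                have h0 : (0:ℤ) ≤ (y.2.size : ℤ) := by positivity
                have h0' : (0:ℤ) ≤ ((GT.node kl ll rl).size : ℤ) := by positivity
                omega
              · rcases List.mem_cons.1 h with rfl | h
                · show ¬((a:ℤ) = k.1.1 + 1)
                  have h0' : (0:ℤ) ≤ ((GT.node kl ll rl).size : ℤ) := by positivity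
                  omega
                · have := hB y h
                  rw [hTsz, hleaf] at this
                  omega)]
          rw [show (A ++ (a, GT.node kl ll rl) :: B).filter
              (fun p => decide ¬(p.1 + (p.2.size : ℤ) = k.1.1 ∨ p.1 = k.1.1 + 1))
              = A ++ B from by
            rw [List.filter_append]
            congr 1
            · apply List.filter_eq_self.2
              intro y hy
              have := hA y hy
              have h0 : (0:ℤ) ≤ (y.2.size : ℤ) := by positivity
              have h0' : (0:ℤ) ≤ ((GT.node kl ll rl).size : ℤ) := by positivity
              simp only [decide_eq_true_eq, not_or]
              exact ⟨by omega, by omega⟩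
            · rw [List.filter_cons_of_neg (by
                simp only [decide_eq_true_eq, not_not]
                exact Or.inl (by omega))]
              apply List.filter_eq_self.2
              intro y hy
              have := hB y hy
              rw [hTsz, hleaf] at this
              have h0 : (0:ℤ) ≤ (y.2.size : ℤ) := by positivity
              simp only [decide_eq_true_eq, not_or]
              exact ⟨by omega, by omega⟩]
          show insSorted (a, GT.node k (GT.node kl ll rl) GT.leaf) (A ++ B)
              = A ++ (a, GT.node k (GT.node kl ll rl) GT.leaf) :: B
          rw [show insSorted (a, GT.node k (GT.node kl ll rl) GT.leaf) (A ++ B)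
              = A ++ (a, GT.node k (GT.node kl ll rl) GT.leaf) :: B from
            insSorted_mid (by
                intro y hy
                have := hA y hy
                have h0 : (0:ℤ) ≤ (y.2.size : ℤ) := by positivity
                omega)
              (by
                intro y hy
                have := hB y hy
                rw [hTsz, hleaf] at this
                omega)]
    · -- both children nonempty : s' = A ++ (a, l) :: (a + l.size + 1, r) :: B
      obtain ⟨kl, ll, rl, rfl⟩ := exists_node hlne
      obtain ⟨kr, lr, rr, rfl⟩ := exists_node hrne
      have hL0 : (0:ℤ) ≤ ((GT.node kl ll rl).size : ℤ) := by positivity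
      have hR0 : (0:ℤ) ≤ ((GT.node kr lr rr).size : ℤ) := by positivity
      have hltk : lexLt kl.1 k.1 := hklbs.2.1
      have hgtk : lexLt k.1 kr.1 := hklbs.2.2.1
      have hllbs : IsLBS ((GT.node kl ll rl).map Prod.fst) a := hklbs.2.2.2.1
      have hrlbs : IsLBS ((GT.node kr lr rr).map Prod.fst)
          (a + ((GT.node kl ll rl).size : ℤ) + 1) := hklbs.2.2.2.2
      have hpwin : (A ++ (a + ((GT.node kl ll rl).size : ℤ) + 1, GT.node kr lr rr)
          :: B).Pairwise RelF := by
        apply pairwise_insert_mid hpwAB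
        · intro y hy
          have := hA y hy
          show y.1 + (y.2.size : ℤ) + 1 ≤ a + ((GT.node kl ll rl).size : ℤ) + 1
          omega
        · intro y hy
          have := hB y hy
          rw [hTsz] at this
          show (a + ((GT.node kl ll rl).size : ℤ) + 1)
              + ((GT.node kr lr rr).size : ℤ) + 1 ≤ y.1
          omega
      have hpws' : (A ++ (a, GT.node kl ll rl)
          :: (a + ((GT.node kl ll rl).size : ℤ) + 1, GT.node kr lr rr)
          :: B).Pairwise RelF := by
        apply pairwise_insert_mid hpwin hA
        · intro y hy
          rcases List.mem_cons.1 hy with rfl | hy'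
          · show a + ((GT.node kl ll rl).size : ℤ) + 1
                ≤ a + ((GT.node kl ll rl).size : ℤ) + 1
            exact le_refl _
          · have := hB y hy'
            rw [hTsz] at this
            show a + ((GT.node kl ll rl).size : ℤ) + 1 ≤ y.1
            omega
      refine ⟨A ++ (a, GT.node kl ll rl)
          :: (a + ((GT.node kl ll rl).size : ℤ) + 1, GT.node kr lr rr) :: B,
        ⟨hpws', ?_, ?_, ?_⟩, ?_, ?_⟩
      · intro p hp
        rcases List.mem_append.1 hp with h | h
        · exact hnl p (hmemA p h)
        · rcases List.mem_cons.1 h with rfl | h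
          · simp
          · rcases List.mem_cons.1 h with rfl | h
            · simp
            · exact hnl p (hmemB p h)
      · intro p hp
        rcases List.mem_append.1 hp with h | h
        · exact hlbs p (hmemA p h)
        · rcases List.mem_cons.1 h with rfl | h
          · exact hllbs
          · rcases List.mem_cons.1 h with rfl | h
            · exact hrlbs
            · exact hlbs p (hmemB p h)
      · intro p hp
        rcases List.mem_append.1 hp with h | h
        · exact hdec p (hmemA p h)
        · rcases List.mem_cons.1 h with rfl | h
          · exact hkdec.2.2.1
          · rcases List.mem_cons.1 h with rfl | h
            · exact hkdec.2.2.2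
            · exact hdec p (hmemB p h)
      · rw [lblA_append, lblA_cons, lblA_append, lblA_cons, lblA_cons]
        show lblA A + ((GT.node k (GT.node kl ll rl) (GT.node kr lr rr)).labels + lblA B)
            = k ::ₘ (lblA A + ((GT.node kl ll rl).labels
                + ((GT.node kr lr rr).labels + lblA B)))
        rw [show (GT.node k (GT.node kl ll rl) (GT.node kr lr rr)).labels
            = k ::ₘ ((GT.node kl ll rl).labels + (GT.node kr lr rr).labels) from rfl]
        simp only [← Multiset.singleton_add]
        abel
      · -- re-insertion
        have hi2 : k.1.1 < a + ((GT.node kl ll rl).size : ℤ)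
            + ((GT.node kr lr rr).size : ℤ) + 1 := by
          rw [hTsz] at hroot2; omega
        rcases lt_trichotomy k.1.1 (a + ((GT.node kl ll rl).size : ℤ)) with hin | hieq | hgt2
        · -- i inside the left subtree
          simp only [insertL, valF, ltF]
          rw [show (A ++ (a, GT.node kl ll rl)
              :: (a + ((GT.node kl ll rl).size : ℤ) + 1, GT.node kr lr rr) :: B).find?
              (fun p => decide (p.1 ≤ k.1.1 ∧ k.1.1 < p.1 + (p.2.size : ℤ)))
              = some (a, GT.node kl ll rl) from
            find?_mid_eq (by
                intro y hy
                simp only [decide_eq_true_eq, not_and, not_lt]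
                intro h1
                have := hA y hy
                omega)
              (by simp only [decide_eq_true_eq]; exact ⟨by omega, by omega⟩)]
          simp only [GT.rootLabel?]
          rw [if_pos (lexLtB_iff.2 hltk)]
          rw [show (A ++ (a, GT.node kl ll rl)
              :: (a + ((GT.node kl ll rl).size : ℤ) + 1, GT.node kr lr rr) :: B).filter
              (fun p => decide (p.1 ≠ a))
              = A ++ (a + ((GT.node kl ll rl).size : ℤ) + 1, GT.node kr lr rr) :: B from
            filter_key_ne hpws']
          rw [show (A ++ (a + ((GT.node kl ll rl).size : ℤ) + 1, GT.node kr lr rr) :: B).find?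
              (fun p => decide (p.1 = a + ((GT.node kl ll rl).size : ℤ) + 1))
              = some (a + ((GT.node kl ll rl).size : ℤ) + 1, GT.node kr lr rr) from
            find?_mid_eq (by
                intro y hy
                simp only [decide_eq_true_eq]
                have := hA y hy
                have h0 : (0:ℤ) ≤ (y.2.size : ℤ) := by positivity
                omega)
              (by simp)]
          show insSorted (a, GT.node k (GT.node kl ll rl) (GT.node kr lr rr))
              ((A ++ (a + ((GT.node kl ll rl).size : ℤ) + 1, GT.node kr lr rr) :: B).filter
                (fun p => decide (p.1 ≠ a + ((GT.node kl ll rl).size : ℤ) + 1)))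
              = A ++ (a, GT.node k (GT.node kl ll rl) (GT.node kr lr rr)) :: B
          rw [show (A ++ (a + ((GT.node kl ll rl).size : ℤ) + 1, GT.node kr lr rr) :: B).filter
              (fun p => decide (p.1 ≠ a + ((GT.node kl ll rl).size : ℤ) + 1))
              = A ++ B from filter_key_ne hpwin]
          rw [show insSorted (a, GT.node k (GT.node kl ll rl) (GT.node kr lr rr)) (A ++ B)
              = A ++ (a, GT.node k (GT.node kl ll rl) (GT.node kr lr rr)) :: B from
            insSorted_mid (by
                intro y hy
                have := hA y hy
                have h0 : (0:ℤ) ≤ (y.2.size : ℤ) := by positivity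
                omega)
              (by
                intro y hy
                have := hB y hy
                rw [hTsz] at this
                omega)]
        · -- i in the gap between the two subtrees
          simp only [insertL, valF, ltF]
          rw [show (A ++ (a, GT.node kl ll rl)
              :: (a + ((GT.node kl ll rl).size : ℤ) + 1, GT.node kr lr rr) :: B).find?
              (fun p => decide (p.1 ≤ k.1.1 ∧ k.1.1 < p.1 + (p.2.size : ℤ))) = none from
            List.find?_eq_none.2 (by
              intro y hy
              simp only [decide_eq_true_eq, not_and, not_lt]
              intro h1
              rcases List.mem_append.1 hy with h | h
              · have := hA y h
                omega
              · rcases List.mem_cons.1 h with rfl | h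
                · show a + ((GT.node kl ll rl).size : ℤ) ≤ k.1.1
                  omega
                · rcases List.mem_cons.1 h with rfl | h
                  · exfalso
                    have : a + ((GT.node kl ll rl).size : ℤ) + 1 ≤ k.1.1 := h1
                    omega
                  · exfalso
                    have := hB y h
                    rw [hTsz] at this
                    have : y.1 ≤ k.1.1 := h1
                    omega)]
          rw [show (A ++ (a, GT.node kl ll rl)
              :: (a + ((GT.node kl ll rl).size : ℤ) + 1, GT.node kr lr rr) :: B).find?
              (fun p => decide (p.1 + (p.2.size : ℤ) = k.1.1))
              = some (a, GT.node kl ll rl) from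
            find?_mid_eq (by
                intro y hy
                simp only [decide_eq_true_eq]
                have := hA y hy
                omega)
              (by simp only [decide_eq_true_eq]; omega)]
          rw [show (A ++ (a, GT.node kl ll rl)
              :: (a + ((GT.node kl ll rl).size : ℤ) + 1, GT.node kr lr rr) :: B).find?
              (fun p => decide (p.1 = k.1.1 + 1))
              = some (a + ((GT.node kl ll rl).size : ℤ) + 1, GT.node kr lr rr) from by
            rw [find?_append_of_none _ (by
              intro y hy
              simp only [decide_eq_true_eq]
              have := hA y hy
              have h0 : (0:ℤ) ≤ (y.2.size : ℤ) := by positivity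
              omega)]
            rw [List.find?_cons_of_neg (by
              simp only [decide_eq_true_eq]
              omega)]
            rw [List.find?_cons_of_pos (by
              simp only [decide_eq_true_eq]
              omega)]]
          rw [show (A ++ (a, GT.node kl ll rl)
              :: (a + ((GT.node kl ll rl).size : ℤ) + 1, GT.node kr lr rr) :: B).filter
              (fun p => decide ¬(p.1 + (p.2.size : ℤ) = k.1.1 ∨ p.1 = k.1.1 + 1))
              = A ++ B from by
            rw [List.filter_append]
            congr 1
            · apply List.filter_eq_self.2
              intro y hy
              have := hA y hy
              have h0 : (0:ℤ) ≤ (y.2.size : ℤ) := by positivity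
              simp only [decide_eq_true_eq, not_or]
              exact ⟨by omega, by omega⟩
            · rw [List.filter_cons_of_neg (by
                simp only [decide_eq_true_eq, not_not]
                exact Or.inl (by omega))]
              rw [List.filter_cons_of_neg (by
                simp only [decide_eq_true_eq, not_not]
                exact Or.inr (by omega))]
              apply List.filter_eq_self.2
              intro y hy
              have := hB y hy
              rw [hTsz] at this
              have h0 : (0:ℤ) ≤ (y.2.size : ℤ) := by positivity
              simp only [decide_eq_true_eq, not_or]
              exact ⟨by omega, by omega⟩]
          show insSorted (a, GT.node k (GT.node kl ll rl) (GT.node kr lr rr)) (A ++ B)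
              = A ++ (a, GT.node k (GT.node kl ll rl) (GT.node kr lr rr)) :: B
          rw [show insSorted (a, GT.node k (GT.node kl ll rl) (GT.node kr lr rr)) (A ++ B)
              = A ++ (a, GT.node k (GT.node kl ll rl) (GT.node kr lr rr)) :: B from
            insSorted_mid (by
                intro y hy
                have := hA y hy
                have h0 : (0:ℤ) ≤ (y.2.size : ℤ) := by positivity
                omega)
              (by
                intro y hy
                have := hB y hy
                rw [hTsz] at this
                omega)]
        · -- i inside the right subtree
          simp only [insertL, valF, ltF]
          rw [show (A ++ (a, GT.node kl ll rl)
              :: (a + ((GT.node kl ll rl).size : ℤ) + 1, GT.node kr lr rr) :: B).find?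
              (fun p => decide (p.1 ≤ k.1.1 ∧ k.1.1 < p.1 + (p.2.size : ℤ)))
              = some (a + ((GT.node kl ll rl).size : ℤ) + 1, GT.node kr lr rr) from by
            rw [find?_append_of_none _ (by
              intro y hy
              simp only [decide_eq_true_eq, not_and, not_lt]
              intro h1
              have := hA y hy
              omega)]
            rw [List.find?_cons_of_neg (by
              simp only [decide_eq_true_eq, not_and, not_lt]
              intro h1
              show a + ((GT.node kl ll rl).size : ℤ) ≤ k.1.1
              omega)]
            rw [List.find?_cons_of_pos (by
              simp only [decide_eq_true_eq]
              exact ⟨by omega, by omega⟩)]]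
          simp only [GT.rootLabel?]
          rw [if_neg (by rw [lexLt_asymm hgtk]; simp)]
          rw [show (A ++ (a, GT.node kl ll rl)
              :: (a + ((GT.node kl ll rl).size : ℤ) + 1, GT.node kr lr rr) :: B).filter
              (fun p => decide (p.1 ≠ a + ((GT.node kl ll rl).size : ℤ) + 1))
              = A ++ (a, GT.node kl ll rl) :: B from by
            rw [List.filter_append]
            congr 1
            · apply List.filter_eq_self.2
              intro y hy
              have := hA y hy
              have h0 : (0:ℤ) ≤ (y.2.size : ℤ) := by positivity
              simp only [ne_eq, decide_not, Bool.not_eq_eq_eq_not, Bool.not_true,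
                decide_eq_false_iff_not]
              omega
            · rw [List.filter_cons_of_pos (by
                simp only [ne_eq, decide_not, Bool.not_eq_eq_eq_not, Bool.not_true,
                  decide_eq_false_iff_not]
                omega)]
              rw [List.filter_cons_of_neg (by
                simp only [ne_eq, decide_not, Bool.not_eq_eq_eq_not, Bool.not_true,
                  decide_eq_false_iff_not, not_not])]
              congr 1
              apply List.filter_eq_self.2
              intro y hy
              have := hB y hy
              rw [hTsz] at this
              simp only [ne_eq, decide_not, Bool.not_eq_eq_eq_not, Bool.not_true,
                decide_eq_false_iff_not]
              omega]
          rw [show (A ++ (a, GT.node kl ll rl) :: B).find?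
              (fun p => decide (p.1 + (p.2.size : ℤ)
                = a + ((GT.node kl ll rl).size : ℤ) + 1 - 1))
              = some (a, GT.node kl ll rl) from
            find?_mid_eq (by
                intro y hy
                simp only [decide_eq_true_eq]
                have := hA y hy
                omega)
              (by simp only [decide_eq_true_eq]; ring)]
          show insSorted (a, GT.node k (GT.node kl ll rl) (GT.node kr lr rr))
              ((A ++ (a, GT.node kl ll rl) :: B).filter (fun p => decide (p.1 ≠ a)))
              = A ++ (a, GT.node k (GT.node kl ll rl) (GT.node kr lr rr)) :: B
          rw [show (A ++ (a, GT.node kl ll rl) :: B).filter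
              (fun p => decide (p.1 ≠ a)) = A ++ B from
            filter_key_ne (x := (a, GT.node kl ll rl)) (A := A) (B := B) (by
              apply pairwise_insert_mid (x := (a, GT.node kl ll rl)) hpwAB
              · intro y hy
                exact hA y hy
              · intro y hy
                have := hB y hy
                rw [hTsz] at this
                show a + ((GT.node kl ll rl).size : ℤ) + 1 ≤ y.1
                omega)]
          rw [show insSorted (a, GT.node k (GT.node kl ll rl) (GT.node kr lr rr)) (A ++ B)
              = A ++ (a, GT.node k (GT.node kl ll rl) (GT.node kr lr rr)) :: B from
            insSorted_mid (by
                intro y hy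
                have := hA y hy
                have h0 : (0:ℤ) ≤ (y.2.size : ℤ) := by positivity
                omega)
              (by
                intro y hy
                have := hB y hy
                rw [hTsz] at this
                omega)]

end Del


section Final
open List

theorem enumL_map_fst (W : List (ℤ × ℕ)) : (enumL W).map Prod.fst = W := by
  unfold enumL
  rw [List.map_map]
  have : (Prod.fst ∘ fun nc : (ℤ × ℕ) × ℕ => ((nc.1, nc.2 + 1) : Lbl)) = Prod.fst := rfl
  rw [this, List.zipIdx_map_fst]

theorem enumL_length (W : List (ℤ × ℕ)) : (enumL W).length = W.length := by
  simp [enumL]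

theorem phi_surj : ∀ N : ℕ, ∀ s : Forest, GoodPair s →
    ((s.map (fun p => p.2.size)).sum = N) → ∃ W : List (ℤ × ℕ), W.Nodup ∧ Phi2 W = s := by
  intro N
  induction N using Nat.strong_induction_on with
  | _ N ih =>
    intro s hs hN
    obtain ⟨hch, hnl, hlbs, hnodupP, hdec, htimes⟩ := hs
    have hpw : s.Pairwise RelF := chain'_iff_pairwise_rel.1 hch
    have hmapsnd : (lblA s).map Prod.snd = (Multiset.range N).map (· + 1) := by
      rw [← lblA_map_snd, htimes, hN]
    have hmapfst : ((lblA s).map Prod.fst).Nodup := by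
      rw [← lblA_map_fst]; exact hnodupP
    have hcard : Multiset.card (lblA s) = N := by rw [card_lblA, hN]
    match N, hN, hmapsnd, hcard, ih with
    | 0, hN, hmapsnd, hcard, ih =>
      have hsnil : s = [] := by
        cases s with
        | nil => rfl
        | cons p t =>
          exfalso
          have h1 : 1 ≤ p.2.size := size_pos_of_ne_leaf (hnl p (by simp))
          simp only [List.map_cons, List.sum_cons] at hN
          omega
      subst hsnil
      exact ⟨[], List.nodup_nil, rfl⟩
    | (N' + 1), hN, hmapsnd, hcard, ih =>
      -- find the label with maximal time N'+1
      have hNmem : (N' + 1) ∈ (Multiset.range (N' + 1)).map (· + 1) :=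
        Multiset.mem_map.2 ⟨N', Multiset.mem_range.2 (by omega), rfl⟩
      rw [← hmapsnd] at hNmem
      obtain ⟨c, hc, hc2⟩ := Multiset.mem_map.1 hNmem
      have hndtimes : ((lblA s).map Prod.snd).Nodup := by
        rw [hmapsnd]
        exact (Multiset.nodup_range _).map (fun a b h => by omega)
      have hmax : ∀ x ∈ lblA s, x.2 ≤ c.2 := by
        intro x hx
        have : x.2 ∈ (lblA s).map Prod.snd := Multiset.mem_map.2 ⟨x, hx, rfl⟩
        rw [hmapsnd] at this
        obtain ⟨j, hj, hje⟩ := Multiset.mem_map.1 this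
        rw [Multiset.mem_range] at hj
        omega
      have huniq : ∀ x ∈ lblA s, x.2 = c.2 → x = c := by
        intro x hx hxc
        exact Multiset.inj_on_of_nodup_map hndtimes x hx c hc hxc
      obtain ⟨s', hs', hlbl, hins⟩ :=
        delete_step ⟨hpw, hnl, hlbs, hdec⟩ hc hmax huniq
      have hcard' : Multiset.card (lblA s') = N' := by
        rw [hlbl] at hcard
        simpa using hcard
      have hsum' : ((s'.map (fun p => p.2.size)).sum) = N' := by
        rw [← card_lblA, hcard']
      have htimes' : (lblA s').map Prod.snd = (Multiset.range N').map (· + 1) := by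
        have h1 : (lblA s).map Prod.snd = c.2 ::ₘ (lblA s').map Prod.snd := by
          rw [hlbl, Multiset.map_cons]
        rw [hmapsnd, hc2, Multiset.range_succ, Multiset.map_cons] at h1
        exact ((Multiset.cons_inj_right _).1 h1).symm
      have hfst' : (lblA s).map Prod.fst = c.1 ::ₘ (lblA s').map Prod.fst := by
        rw [hlbl, Multiset.map_cons]
      have hnodup' : ((lblA s').map Prod.fst).Nodup := by
        rw [hfst'] at hmapfst
        exact (Multiset.nodup_cons.1 hmapfst).2
      have hc1notin : c.1 ∉ (lblA s').map Prod.fst := by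
        rw [hfst'] at hmapfst
        exact (Multiset.nodup_cons.1 hmapfst).1
      have hgood' : GoodPair s' := by
        refine ⟨chain'_iff_pairwise_rel.2 hs'.1, hs'.2.1, hs'.2.2.1, ?_, hs'.2.2.2, ?_⟩
        · rw [lblA_map_fst]; exact hnodup'
        · rw [lblA_map_snd, hsum', htimes']
      obtain ⟨W', hnd', hPhi'⟩ := ih N' (by omega) s' hgood' hsum'
      have hlblW' : lblA s' = ↑(enumL W') := by
        rw [← hPhi']; exact (fwd W' hnd').2
      have hlen : W'.length = N' := by
        have := congrArg Multiset.card hlblW'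
        rw [hcard'] at this
        simpa [enumL_length] using this.symm
      have hcnotin : c.1 ∉ W' := by
        intro hcon
        apply hc1notin
        rw [hlblW', Multiset.map_coe, enumL_map_fst]
        exact Multiset.mem_coe.2 hcon
      refine ⟨W' ++ [c.1], ?_, ?_⟩
      · rw [List.nodup_append]
        exact ⟨hnd', List.nodup_singleton _, by
          intro x hx y hy hxy
          rw [List.mem_singleton] at hy
          subst hy; subst hxy
          exact hcnotin hx⟩
      · rw [Phi2_snoc, hPhi', hlen]
        have hcc : ((c.1, N' + 1) : Lbl) = c := Prod.ext rfl hc2.symm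
        rw [hcc]
        exact hins

end Final


/-- the insertion correspondence `Φ` is a bijection between
injective words over the alphabet `{i^{(j)}}` and pairs `(P, Q)` where `P` is a
local binary search labeling and `Q` a decreasing labeling of a common indexed
forest. -/
theorem phi_bijection :
    (∀ W : List (ℤ × ℕ), W.Nodup → GoodPair (Phi2 W)) ∧
    (∀ s : List (ℤ × GT ((ℤ × ℕ) × ℕ)), GoodPair s →
      ∃! W : List (ℤ × ℕ), W.Nodup ∧ Phi2 W = s) := by
  constructor
  · exact fun W hW => fwd_good W hW
  · intro s hs
    obtain ⟨W, hW, hP⟩ := phi_surj _ s hs rfl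
    refine ⟨W, ⟨hW, hP⟩, ?_⟩
    rintro W' ⟨hW', hP'⟩
    exact phi_inj hW' hW (by rw [hP, hP'])
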